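/- arXiv:2304.04288 — 6 statements merged into one kernel-verified Lean document; each statement's English description precedes it below -/
import Mathlib

section
/- For the dihedral group D_{2n} with n ≥ 3, the characteristic polynomial of the distance matrix of the enhanced power graph of D_{2n} equals (x+2)^{n−1}(x+1)^{n−2}(x³ − (3n−4)x² − (2n² + 4n − 5)x − n² − 2n + 2). -/
open Polynomial

/-- The enhanced power graph of a group `G`: distinct `a`, `b` are adjacent iff
they lie in a common cyclic subgroup. -/
def enhancedPowerGraph (G : Type*) [Group G] : SimpleGraph G where
  Adj a b := a ≠ b ∧ ∃ c : G, a ∈ Subgroup.zpowers c ∧ b ∈ Subgroup.zpowers c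
  symm := ⟨by rintro a b ⟨h, c, ha, hb⟩; exact ⟨h.symm, c, hb, ha⟩⟩
  loopless := ⟨by rintro a ⟨h, _⟩; exact h rfl⟩

/-- The power graph of a group `G`: distinct `a`, `b` are adjacent iff
one is a power of the other. -/
def powerGraph (G : Type*) [Group G] : SimpleGraph G where
  Adj a b := a ≠ b ∧ (a ∈ Subgroup.zpowers b ∨ b ∈ Subgroup.zpowers a)
  symm := ⟨by rintro a b ⟨h, hc⟩; exact ⟨h.symm, hc.symm⟩⟩
  loopless := ⟨by rintro a ⟨h, _⟩; exact h rfl⟩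

/-- The distance matrix of a graph, with real entries. -/
noncomputable def distMatrix {V : Type*} (Γ : SimpleGraph V) : Matrix V V ℝ :=
  fun u v => (Γ.dist u v : ℝ)

/-- The elementary abelian group `El(p^n) = (ℤ/p)^n`, written multiplicatively. -/
abbrev El (p n : ℕ) : Type := Multiplicative (Fin n → ZMod p)

namespace DihedralGroup
variable {n : ℕ}

lemma r_zpow_form (j : ZMod n) (m : ℤ) : ∃ k, (r j : DihedralGroup n) ^ m = r k := by
  have hpow : ∀ a : ℕ, ∃ k, (r j : DihedralGroup n) ^ a = r k := by
    intro a
    induction a with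
    | zero => exact ⟨0, rfl⟩
    | succ a ih => obtain ⟨k, hk⟩ := ih; exact ⟨k + j, by rw [pow_succ, hk, r_mul_r]⟩
  rcases m with a | a
  · simpa using hpow a
  · obtain ⟨k, hk⟩ := hpow (a + 1)
    exact ⟨-k, by rw [zpow_negSucc, hk]; rfl⟩

lemma sr_zpow_form (j : ZMod n) (m : ℤ) :
    (sr j : DihedralGroup n) ^ m = 1 ∨ (sr j : DihedralGroup n) ^ m = sr j := by
  have h2 : (sr j : DihedralGroup n) ^ (2 : ℤ) = 1 := by
    rw [zpow_two, sr_mul_self]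
  rcases Int.even_or_odd m with ⟨k, hk⟩ | ⟨k, hk⟩
  · left; rw [hk, ← two_mul, zpow_mul, h2, one_zpow]
  · right; rw [hk, zpow_add, zpow_mul, h2, one_zpow, one_mul, zpow_one]

lemma mem_zpowers_r_one (i : ZMod n) [NeZero n] :
    (r i : DihedralGroup n) ∈ Subgroup.zpowers (r 1) := by
  refine ⟨(i.val : ℤ), ?_⟩
  show (r 1 : DihedralGroup n) ^ ((i.val : ℕ) : ℤ) = r i
  rw [zpow_natCast, r_one_pow, ZMod.natCast_val, ZMod.cast_id]

lemma adj_r_r [NeZero n] {i j : ZMod n} (h : i ≠ j) :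
    (enhancedPowerGraph (DihedralGroup n)).Adj (r i) (r j) :=
  ⟨by simpa using h, r 1, mem_zpowers_r_one i, mem_zpowers_r_one j⟩

lemma sr_ne_one (i : ZMod n) : (sr i : DihedralGroup n) ≠ 1 := by
  rw [one_def]; intro h; cases h

lemma adj_one (x : DihedralGroup n) (h : x ≠ 1) :
    (enhancedPowerGraph (DihedralGroup n)).Adj 1 x :=
  ⟨Ne.symm h, x, Subgroup.one_mem _, Subgroup.mem_zpowers x⟩

lemma not_adj_sr (i : ZMod n) (x : DihedralGroup n) (hx : x ≠ 1) (hxi : x ≠ sr i) :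
    ¬ (enhancedPowerGraph (DihedralGroup n)).Adj (sr i) x := by
  rintro ⟨hne, c, hc1, hc2⟩
  rcases c with t | t
  · obtain ⟨m, hm⟩ := hc1
    dsimp only at hm
    obtain ⟨k, hk⟩ := r_zpow_form t m
    rw [hk] at hm
    exact absurd hm.symm (by simp)
  · obtain ⟨m, hm⟩ := hc1
    dsimp only at hm
    rcases sr_zpow_form t m with h | h
    · rw [h] at hm; exact (sr_ne_one i) hm.symm
    · rw [h] at hm
      obtain rfl : t = i := by simpa [sr.injEq] using hm
      obtain ⟨m', hm'⟩ := hc2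
      dsimp only at hm'
      rcases sr_zpow_form t m' with h' | h' <;> rw [h'] at hm'
      · exact hx hm'.symm
      · exact hxi hm'.symm

lemma epg_dist_two {u v : DihedralGroup n} (hne : u ≠ v)
    (hadj : ¬ (enhancedPowerGraph (DihedralGroup n)).Adj u v)
    (hu : u ≠ 1) (hv : v ≠ 1) :
    (enhancedPowerGraph (DihedralGroup n)).dist u v = 2 := by
  set Γ := enhancedPowerGraph (DihedralGroup n)
  let p : Γ.Walk u v := .cons (adj_one u hu).symm (.cons (adj_one v hv) .nil)
  have hle : Γ.dist u v ≤ 2 := by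
    simpa [p] using SimpleGraph.dist_le p
  have h0 : Γ.dist u v ≠ 0 :=
    SimpleGraph.dist_ne_zero_iff_ne_and_reachable.mpr ⟨hne, ⟨p⟩⟩
  have h1 : Γ.dist u v ≠ 1 := fun h =>
    hadj (SimpleGraph.dist_eq_one_iff_adj.mp h)
  omega

lemma r_eq_one_iff {i : ZMod n} : (r i : DihedralGroup n) = 1 ↔ i = 0 := by
  rw [one_def, r.injEq]

lemma dist_r_r [NeZero n] (i j : ZMod n) :
    (enhancedPowerGraph (DihedralGroup n)).dist (r i) (r j)
      = if i = j then 0 else 1 := by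
  split
  · next h => rw [h]; exact SimpleGraph.dist_self
  · next h => exact SimpleGraph.dist_eq_one_iff_adj.mpr (adj_r_r h)

lemma dist_r_sr (i j : ZMod n) :
    (enhancedPowerGraph (DihedralGroup n)).dist (r i) (sr j)
      = if i = 0 then 1 else 2 := by
  split
  · next h =>
    subst h
    rw [← one_def]
    exact SimpleGraph.dist_eq_one_iff_adj.mpr (adj_one (sr j) (sr_ne_one j))
  · next h =>
    refine epg_dist_two (by simp) ?_ (by simpa [r_eq_one_iff] using h) (sr_ne_one j)
    intro hadj
    exact not_adj_sr j (r i) (by simpa [r_eq_one_iff] using h) (by simp) hadj.symm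

lemma dist_sr_r (i j : ZMod n) :
    (enhancedPowerGraph (DihedralGroup n)).dist (sr i) (r j)
      = if j = 0 then 1 else 2 := by
  rw [SimpleGraph.dist_comm, dist_r_sr]

lemma dist_sr_sr (i j : ZMod n) :
    (enhancedPowerGraph (DihedralGroup n)).dist (sr i) (sr j)
      = if i = j then 0 else 2 := by
  split
  · next h => rw [h]; exact SimpleGraph.dist_self
  · next h =>
    refine epg_dist_two (by simpa using h) ?_ (sr_ne_one i) (sr_ne_one j)
    exact not_adj_sr i (sr j) (sr_ne_one j) (by simpa using Ne.symm h)

end DihedralGroup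

namespace Stmt5Aux

noncomputable abbrev Kf : Type := FractionRing (Polynomial ℝ)
noncomputable def phi : Polynomial ℝ →+* Kf := algebraMap _ _
noncomputable def t : Kf := phi Polynomial.X

lemma phi_inj : Function.Injective phi := IsFractionRing.injective (Polynomial ℝ) Kf

lemma ht1 : t + 1 ≠ 0 := by
  have h : t + 1 = phi (Polynomial.X + Polynomial.C 1) := by
    simp [t, map_add, map_one]
  rw [h, ← map_zero phi]
  intro hc
  exact (Polynomial.monic_X_add_C (1:ℝ)).ne_zero (phi_inj hc)

lemma ht2 : t + 2 ≠ 0 := by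
  have h : t + 2 = phi (Polynomial.X + Polynomial.C 2) := by
    simp [t, map_add, map_ofNat]
  rw [h, ← map_zero phi]
  intro hc
  exact (Polynomial.monic_X_add_C (2:ℝ)).ne_zero (phi_inj hc)

variable (n : ℕ)

noncomputable def dv : ZMod n ⊕ ZMod n → Kf := Sum.elim (fun _ => t + 1) (fun _ => t + 2)

noncomputable def Lam : Matrix (ZMod n ⊕ ZMod n) (ZMod n ⊕ ZMod n) Kf := Matrix.diagonal (dv n)

noncomputable def LamInv : Matrix (ZMod n ⊕ ZMod n) (ZMod n ⊕ ZMod n) Kf :=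
  Matrix.diagonal (fun v => (dv n v)⁻¹)

noncomputable def Um : Matrix (ZMod n ⊕ ZMod n) (Fin 3) Kf :=
  Matrix.of fun v k =>
    Sum.elim (fun i => ![(1:Kf), if i = 0 then 1 else 0, 0] k) (fun _ => ![(0:Kf),0,1] k) v

noncomputable def Wm : Matrix (Fin 3) (ZMod n ⊕ ZMod n) Kf :=
  Matrix.of fun k v =>
    Sum.elim (fun j => ![(-1:Kf), 0, (if j = 0 then (1:Kf) else 0) - 2] k)
      (fun _ => ![(-2:Kf), 1, -2] k) v

noncomputable def Gm : Matrix (Fin 3) (Fin 3) Kf :=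
  !![-(n:Kf)*(t+1)⁻¹, -(t+1)⁻¹, -2*(n:Kf)*(t+2)⁻¹;
     0, 0, (n:Kf)*(t+2)⁻¹;
     (1-2*(n:Kf))*(t+1)⁻¹, -(t+1)⁻¹, -2*(n:Kf)*(t+2)⁻¹]

lemma hLam [NeZero n] : Lam n * LamInv n = 1 := by
  rw [Lam, LamInv, Matrix.diagonal_mul_diagonal]
  have h : ∀ v, dv n v * (dv n v)⁻¹ = 1 := by
    rintro (i|i) <;> simp [dv, mul_inv_cancel₀, ht1, ht2]
  simp [h]

lemma hdetLam [NeZero n] : (Lam n).det = (t+1)^n * (t+2)^n := by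
  rw [Lam, Matrix.det_diagonal, Fintype.prod_sum_type]
  simp [dv, Finset.prod_const, Finset.card_univ, ZMod.card]

lemma key2 [NeZero n] : Wm n * (LamInv n * Um n) = Gm n := by
  ext k l
  rw [Matrix.mul_apply]
  have hLU : ∀ (v : ZMod n ⊕ ZMod n) (l : Fin 3),
      (LamInv n * Um n) v l = (dv n v)⁻¹ * Um n v l := by
    intro v l
    rw [LamInv, Matrix.diagonal_mul]
  simp only [hLU]
  rw [Fintype.sum_sum_type]
  fin_cases k <;> fin_cases l <;>
    simp [Wm, Um, dv, mul_ite, ite_mul, sub_mul, mul_sub, Finset.sum_sub_distrib,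
      Finset.sum_ite_eq', Finset.sum_const, Finset.card_univ, ZMod.card, nsmul_eq_mul, Gm] <;>
    ring

set_option maxHeartbeats 1000000 in
lemma keyE : (t+1)^2 * (t+2) * (1 + Gm n).det
    = t^3 - (3*(n:Kf)-4)*t^2 - (2*(n:Kf)^2+4*(n:Kf)-5)*t - ((n:Kf)^2+2*(n:Kf)-2) := by
  have step1 : ((t+1)*(t+2)) • (1 + Gm n) =
      !![(t+1)*(t+2) - (n:Kf)*(t+2), -(t+2), -2*(n:Kf)*(t+1);
         0, (t+1)*(t+2), (n:Kf)*(t+1);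
         (1-2*(n:Kf))*(t+2), -(t+2), (t+1)*(t+2) - 2*(n:Kf)*(t+1)] := by
    have h1 : (1:Kf) + t ≠ 0 := by rw [add_comm]; exact ht1
    have h2 : (2:Kf) + t ≠ 0 := by rw [add_comm]; exact ht2
    ext k l
    fin_cases k <;> fin_cases l <;>
      · simp [Gm, Matrix.one_apply]
        try field_simp [ht1, ht2]
        try ring
  have hcard : Fintype.card (Fin 3) = 3 := by simp
  have step2 : ((t+1)*(t+2))^3 * (1 + Gm n).det =
      (t^3 - (3*(n:Kf)-4)*t^2 - (2*(n:Kf)^2+4*(n:Kf)-5)*t - ((n:Kf)^2+2*(n:Kf)-2))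
        * ((t+1)*(t+2)^2) := by
    have hsm := Matrix.det_smul (1 + Gm n) ((t+1)*(t+2))
    rw [hcard] at hsm
    rw [← hsm, step1]
    simp only [Matrix.det_fin_three, Matrix.of_apply, Matrix.cons_val', Matrix.cons_val_zero,
      Matrix.cons_val_one, Matrix.cons_val_two, Matrix.cons_val_succ, Matrix.vecTail,
      Matrix.vecHead, Function.comp, Matrix.head_cons, Matrix.empty_val',
      Matrix.cons_val_fin_one, Matrix.head_fin_const]
    ring
  have hne : (t+1)*(t+2)^2 ≠ 0 := mul_ne_zero ht1 (pow_ne_zero _ ht2)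
  apply mul_left_cancel₀ hne
  calc ((t+1)*(t+2)^2) * ((t+1)^2 * (t+2) * (1 + Gm n).det)
      = ((t+1)*(t+2))^3 * (1 + Gm n).det := by ring
    _ = _ := by rw [step2]; ring

end Stmt5Aux

set_option maxHeartbeats 2000000 in
open Stmt5Aux in
theorem stmt5 (n : ℕ) [NeZero n] (hn : 3 ≤ n) :
    (distMatrix (enhancedPowerGraph (DihedralGroup n))).charpoly
      = (X + C 2) ^ (n - 1) * (X + C 1) ^ (n - 2) *
        (X ^ 3 - C (3 * (n : ℝ) - 4) * X ^ 2
          - C (2 * (n : ℝ) ^ 2 + 4 * n - 5) * X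
          - C ((n : ℝ) ^ 2 + 2 * n - 2)) := by
  classical
  set M := distMatrix (enhancedPowerGraph (DihedralGroup n)) with hM
  let eqv : (ZMod n ⊕ ZMod n) ≃ DihedralGroup n :=
    { toFun := Sum.elim DihedralGroup.r DihedralGroup.sr
      invFun := fun x => match x with
        | DihedralGroup.r i => Sum.inl i
        | DihedralGroup.sr i => Sum.inr i
      left_inv := by rintro (i | i) <;> rfl
      right_inv := by rintro (i | i) <;> rfl }
  have hre : M.charpoly = (M.submatrix eqv eqv).charpoly := by
    have h2 : M.submatrix eqv eqv = (Matrix.reindex eqv.symm eqv.symm) M := by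
      ext v w
      simp [Matrix.reindex_apply]
    rw [h2, Matrix.charpoly_reindex]
  rw [hre]
  apply phi_inj
  rw [Matrix.charpoly, RingHom.map_det, RingHom.mapMatrix_apply]
  have hC2 : phi (C (2:ℝ)) = 2 := by
    rw [map_ofNat, map_ofNat]
  have key1 : (Matrix.charmatrix (M.submatrix eqv eqv)).map phi = Lam n + Um n * Wm n := by
    ext v w
    rcases v with i | i <;> rcases w with j | j
    · by_cases hij : i = j
      · subst hij
        rw [Matrix.map_apply, Matrix.charmatrix_apply_eq]
        simp [hM, distMatrix, Matrix.submatrix_apply, eqv, DihedralGroup.dist_r_r,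
          Matrix.add_apply, Matrix.mul_apply, Fin.sum_univ_three, Lam, Um, Wm, dv, hC2,
          Matrix.diagonal_apply_eq, map_sub, map_one, t]
      · rw [Matrix.map_apply, Matrix.charmatrix_apply_ne _ _ _ (by simpa using hij)]
        simp [hM, distMatrix, Matrix.submatrix_apply, eqv, DihedralGroup.dist_r_r, hij,
          Matrix.add_apply, Matrix.mul_apply, Fin.sum_univ_three, Lam, Um, Wm, dv, hC2,
          Matrix.diagonal_apply_ne _ (show Sum.inl i ≠ Sum.inl j by simpa using hij)]
    · rw [Matrix.map_apply, Matrix.charmatrix_apply_ne _ _ _ (by simp)]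
      by_cases hi : i = 0 <;>
        simp [hM, distMatrix, Matrix.submatrix_apply, eqv, DihedralGroup.dist_r_sr, hi,
          Matrix.add_apply, Matrix.mul_apply, Fin.sum_univ_three, Lam, Um, Wm, dv, hC2,
          Matrix.diagonal_apply_ne _ (show (Sum.inl i : ZMod n ⊕ ZMod n)  ≠ Sum.inr j by simp)] <;>
        try norm_num
      all_goals exact DihedralGroup.adj_one _ (DihedralGroup.sr_ne_one j)
    · rw [Matrix.map_apply, Matrix.charmatrix_apply_ne _ _ _ (by simp)]
      by_cases hj : j = 0 <;>
        simp [hM, distMatrix, Matrix.submatrix_apply, eqv, DihedralGroup.dist_sr_r, hj,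
          Matrix.add_apply, Matrix.mul_apply, Fin.sum_univ_three, Lam, Um, Wm, dv, hC2,
          Matrix.diagonal_apply_ne _ (show (Sum.inr i : ZMod n ⊕ ZMod n)  ≠ Sum.inl j by simp)] <;>
        try norm_num
      all_goals exact (DihedralGroup.adj_one _ (DihedralGroup.sr_ne_one i)).symm
    · by_cases hij : i = j
      · subst hij
        rw [Matrix.map_apply, Matrix.charmatrix_apply_eq]
        simp [hM, distMatrix, Matrix.submatrix_apply, eqv, DihedralGroup.dist_sr_sr,
          Matrix.add_apply, Matrix.mul_apply, Fin.sum_univ_three, Lam, Um, Wm, dv, hC2,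
          Matrix.diagonal_apply_eq, map_sub, map_one, t]
        try ring
      · rw [Matrix.map_apply, Matrix.charmatrix_apply_ne _ _ _ (by simpa using hij)]
        simp [hM, distMatrix, Matrix.submatrix_apply, eqv, DihedralGroup.dist_sr_sr, hij,
          Matrix.add_apply, Matrix.mul_apply, Fin.sum_univ_three, Lam, Um, Wm, dv, hC2,
          Matrix.diagonal_apply_ne _ (show (Sum.inr i : ZMod n ⊕ ZMod n) ≠ Sum.inr j by simpa using hij)]
  rw [key1]
  have h1 : Lam n * (1 + (LamInv n * Um n) * Wm n) = Lam n + Um n * Wm n := by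
    rw [Matrix.mul_add, Matrix.mul_one, ← Matrix.mul_assoc, ← Matrix.mul_assoc, hLam n,
      Matrix.one_mul]
  rw [← h1, Matrix.det_mul, Matrix.det_one_add_mul_comm, key2 n, hdetLam n]
  have hrhs : phi ((X + C 2) ^ (n - 1) * (X + C 1) ^ (n - 2) *
        (X ^ 3 - C (3 * (n : ℝ) - 4) * X ^ 2
          - C (2 * (n : ℝ) ^ 2 + 4 * n - 5) * X
          - C ((n : ℝ) ^ 2 + 2 * n - 2)))
      = (t+2)^(n-1) * (t+1)^(n-2) *
        (t^3 - (3*(n:Kf)-4)*t^2 - (2*(n:Kf)^2+4*(n:Kf)-5)*t - ((n:Kf)^2+2*(n:Kf)-2)) := by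
    simp [map_mul, map_pow, map_add, map_sub, map_ofNat, map_one, map_natCast, t]
  rw [hrhs]
  obtain ⟨m, rfl⟩ : ∃ m, n = m + 3 := ⟨n - 3, by omega⟩
  have e1 : m + 3 - 1 = m + 2 := by omega
  have e2 : m + 3 - 2 = m + 1 := by omega
  rw [e1, e2]
  calc (t+1)^(m+3) * (t+2)^(m+3) * (1 + Gm (m+3)).det
      = (t+1)^(m+1)*(t+2)^(m+2) * ((t+1)^2 * (t+2) * (1 + Gm (m+3)).det) := by ring
    _ = (t+1)^(m+1)*(t+2)^(m+2) *
        (t^3 - (3*(((m+3):ℕ):Kf)-4)*t^2 - (2*(((m+3):ℕ):Kf)^2+4*(((m+3):ℕ):Kf)-5)*t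
          - ((((m+3):ℕ):Kf)^2+2*(((m+3):ℕ):Kf)-2)) := by rw [keyE]
    _ = _ := by
      have hc : ((m+3 : ℕ) : Kf) = (m:Kf)+3 := by push_cast; ring
      rw [hc]
      ring
end

section
/- For every n ≥ 3, the distance matrix of the enhanced power graph of the dihedral group D_{2n} is non-singular. -/
open Polynomial

namespace Stmt6Aux

open DihedralGroup SimpleGraph

variable {n : ℕ}

lemma r_pow (k : ZMod n) (m : ℕ) :
    (r k : DihedralGroup n) ^ m = r ((m : ZMod n) * k) := by
  induction m with
  | zero => rw [pow_zero, Nat.cast_zero, zero_mul, one_def]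
  | succ m ih =>
      rw [pow_succ, ih, r_mul_r]
      congr 1
      push_cast
      ring

lemma r_inv (k : ZMod n) : (r k : DihedralGroup n)⁻¹ = r (-k) := rfl

lemma mem_zpowers_r {x : DihedralGroup n} {k : ZMod n}
    (h : x ∈ Subgroup.zpowers (r k)) : ∃ m, x = r m := by
  obtain ⟨z, hz⟩ := h
  replace hz : (r k : DihedralGroup n) ^ z = x := hz
  cases z with
  | ofNat m => exact ⟨_, by rw [← hz, Int.ofNat_eq_coe, zpow_natCast, r_pow]⟩
  | negSucc m =>
      refine ⟨-((m+1 : ℕ) * k), ?_⟩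
      rw [← hz, zpow_negSucc, r_pow, r_inv]

lemma sr_sq (k : ZMod n) : (sr k : DihedralGroup n) * sr k = 1 := by
  rw [sr_mul_sr, sub_self, one_def]

lemma mem_zpowers_sr {x : DihedralGroup n} {k : ZMod n}
    (h : x ∈ Subgroup.zpowers (sr k)) : x = 1 ∨ x = sr k := by
  obtain ⟨z, hz⟩ := h
  replace hz : (sr k : DihedralGroup n) ^ z = x := hz
  have h2 : (sr k : DihedralGroup n) ^ (2 : ℤ) = 1 := by
    rw [zpow_two]; exact sr_sq k
  rcases Int.even_or_odd z with ⟨m, hm⟩ | ⟨m, hm⟩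
  · left
    rw [← hz, hm, ← two_mul, zpow_mul, h2, one_zpow]
  · right
    rw [← hz, hm, zpow_add, zpow_mul, h2, one_zpow, one_mul, zpow_one]

variable [NeZero n]

lemma r_mem_zpowers_r_one (i : ZMod n) :
    (r i : DihedralGroup n) ∈ Subgroup.zpowers (r 1) := by
  refine ⟨(i.val : ℤ), ?_⟩
  show (r 1 : DihedralGroup n) ^ ((i.val : ℕ) : ℤ) = r i
  rw [zpow_natCast, r_pow, mul_one, ZMod.natCast_val, ZMod.cast_id]

lemma adj_rr {i j : ZMod n} (h : i ≠ j) :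
    (enhancedPowerGraph (DihedralGroup n)).Adj (r i) (r j) :=
  ⟨by simp [h], r 1, r_mem_zpowers_r_one i, r_mem_zpowers_r_one j⟩

lemma adj_r0_sr (j : ZMod n) :
    (enhancedPowerGraph (DihedralGroup n)).Adj (r 0) (sr j) := by
  refine ⟨(by intro h; cases h), sr j, ?_, Subgroup.mem_zpowers _⟩
  rw [← one_def]; exact Subgroup.one_mem _

lemma not_adj_r_sr {i : ZMod n} (hi : i ≠ 0) (j : ZMod n) :
    ¬ (enhancedPowerGraph (DihedralGroup n)).Adj (r i) (sr j) := by
  rintro ⟨-, (c | c), h1, h2⟩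
  · obtain ⟨m, hm⟩ := mem_zpowers_r h2; simp at hm
  · rcases mem_zpowers_sr h1 with h | h
    · rw [one_def] at h; simp only [r.injEq] at h; exact hi h
    · simp at h

lemma not_adj_sr_sr {i j : ZMod n} (hij : i ≠ j) :
    ¬ (enhancedPowerGraph (DihedralGroup n)).Adj (sr i) (sr j) := by
  rintro ⟨-, (c | c), h1, h2⟩
  · obtain ⟨m, hm⟩ := mem_zpowers_r h1; simp at hm
  · rcases mem_zpowers_sr h1 with h | h
    · rw [one_def] at h; cases h
    · rcases mem_zpowers_sr h2 with h' | h'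
      · rw [one_def] at h'; cases h'
      · simp at h h'; exact hij (h.trans h'.symm)

lemma dist_rr (i j : ZMod n) :
    (enhancedPowerGraph (DihedralGroup n)).dist (r i) (r j) =
      if i = j then 0 else 1 := by
  split_ifs with h
  · subst h; exact dist_self
  · exact dist_eq_one_iff_adj.mpr (adj_rr h)

lemma dist_r_sr (i j : ZMod n) :
    (enhancedPowerGraph (DihedralGroup n)).dist (r i) (sr j) =
      if i = 0 then 1 else 2 := by
  split_ifs with h
  · subst h; exact dist_eq_one_iff_adj.mpr (adj_r0_sr j)
  · let w : (enhancedPowerGraph (DihedralGroup n)).Walk (r i) (sr j) :=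
      .cons (adj_rr h) (.cons (adj_r0_sr j) .nil)
    have hle : (enhancedPowerGraph (DihedralGroup n)).dist (r i) (sr j) ≤ 2 := by
      exact (SimpleGraph.dist_le w).trans (le_of_eq rfl)
    have hpos : 0 < (enhancedPowerGraph (DihedralGroup n)).dist (r i) (sr j) :=
      Reachable.pos_dist_of_ne ⟨w⟩ (by simp)
    have hne1 : (enhancedPowerGraph (DihedralGroup n)).dist (r i) (sr j) ≠ 1 := by
      intro h1
      exact not_adj_r_sr h j (dist_eq_one_iff_adj.mp h1)
    omega

lemma dist_sr_sr (i j : ZMod n) :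
    (enhancedPowerGraph (DihedralGroup n)).dist (sr i) (sr j) =
      if i = j then 0 else 2 := by
  split_ifs with h
  · subst h; exact dist_self
  · let w : (enhancedPowerGraph (DihedralGroup n)).Walk (sr i) (sr j) :=
      .cons (adj_r0_sr i).symm (.cons (adj_r0_sr j) .nil)
    have hle : (enhancedPowerGraph (DihedralGroup n)).dist (sr i) (sr j) ≤ 2 := by
      exact (SimpleGraph.dist_le w).trans (le_of_eq rfl)
    have hpos : 0 < (enhancedPowerGraph (DihedralGroup n)).dist (sr i) (sr j) :=
      Reachable.pos_dist_of_ne ⟨w⟩ (by simp [h])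
    have hne1 : (enhancedPowerGraph (DihedralGroup n)).dist (sr i) (sr j) ≠ 1 := by
      intro h1
      exact not_adj_sr_sr h (dist_eq_one_iff_adj.mp h1)
    omega

lemma dist_sr_r (i j : ZMod n) :
    (enhancedPowerGraph (DihedralGroup n)).dist (sr i) (r j) =
      if j = 0 then 1 else 2 := by
  rw [SimpleGraph.dist_comm, dist_r_sr]

/-- the sum splitting -/
def dihedralEquiv : (ZMod n) ⊕ (ZMod n) ≃ DihedralGroup n where
  toFun i := match i with
    | Sum.inl j => r j
    | Sum.inr j => sr j
  invFun i := match i with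
    | r j => Sum.inl j
    | sr j => Sum.inr j
  left_inv := by rintro (x | x) <;> rfl
  right_inv := by rintro (x | x) <;> rfl

lemma sum_dihedral (f : DihedralGroup n → ℝ) :
    ∑ x, f x = (∑ i, f (r i)) + ∑ i, f (sr i) := by
  rw [← Equiv.sum_comp (dihedralEquiv (n := n)) f, Fintype.sum_sum_type]
  rfl

lemma sum_ite_const (i : ZMod n) (c d : ℝ) (f : ZMod n → ℝ) :
    ∑ j, (if j = i then c else d) * f j = d * ∑ j, f j + (c - d) * f i := by
  have : ∀ j : ZMod n, (if j = i then c else d) * f j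
      = d * f j + (if j = i then (c - d) * f j else 0) := by
    intro j; split_ifs with h <;> ring
  rw [Finset.sum_congr rfl fun j _ => this j, Finset.sum_add_distrib,
    ← Finset.mul_sum, Fintype.sum_ite_eq' i (fun j => (c - d) * f j)]

end Stmt6Aux

open Stmt6Aux DihedralGroup in
theorem stmt6 (n : ℕ) [NeZero n] (hn : 3 ≤ n) :
    (distMatrix (enhancedPowerGraph (DihedralGroup n))).det ≠ 0 := by
  intro hdet
  obtain ⟨v, hv0, hMv⟩ := Matrix.exists_mulVec_eq_zero_iff.mpr hdet
  set M := distMatrix (enhancedPowerGraph (DihedralGroup n)) with hM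
  set A := ∑ i : ZMod n, v (r i) with hA
  set B := ∑ i : ZMod n, v (sr i) with hB
  set a := v (r 0) with ha
  set N := (n : ℝ) with hNdef
  have hN : (3 : ℝ) ≤ N := by rw [hNdef]; exact_mod_cast hn
  have hrow : ∀ u, (∑ i, M u (r i) * v (r i)) + ∑ i, M u (sr i) * v (sr i) = 0 := by
    intro u
    have h := congrFun hMv u
    simp only [Matrix.mulVec, dotProduct, Pi.zero_apply] at h
    rw [← sum_dihedral (fun x => M u x * v x)]
    exact h
  -- entries
  have Mrr : ∀ i j : ZMod n, M (r i) (r j) = if j = i then 0 else 1 := by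
    intro i j
    simp only [hM, distMatrix, dist_rr]
    split_ifs with h1 h2 <;> simp_all <;> tauto
  have Mrsr : ∀ i j : ZMod n, M (r i) (sr j) = if i = 0 then 1 else 2 := by
    intro i j
    simp only [hM, distMatrix, dist_r_sr]
    split_ifs <;> norm_num
  have Msrr : ∀ i j : ZMod n, M (sr i) (r j) = if j = 0 then 1 else 2 := by
    intro i j
    simp only [hM, distMatrix, dist_sr_r]
    split_ifs <;> norm_num
  have Msrsr : ∀ i j : ZMod n, M (sr i) (sr j) = if j = i then 0 else 2 := by
    intro i j
    simp only [hM, distMatrix, dist_sr_sr]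
    split_ifs with h1 h2 <;> simp_all <;> tauto
  -- reflections rows: v (sr i) = A - a/2 + B
  have hvs : ∀ i : ZMod n, v (sr i) = A - a / 2 + B := by
    intro i
    have h := hrow (sr i)
    simp only [Msrr, Msrsr] at h
    rw [sum_ite_const 0 1 2 (fun j => v (r j)),
        sum_ite_const i 0 2 (fun j => v (sr j)), ← hA, ← hB, ← ha] at h
    linarith
  -- rotation rows, i ≠ 0: v (r i) = A + 2B
  have hvr : ∀ i : ZMod n, i ≠ 0 → v (r i) = A + 2 * B := by
    intro i hi
    have h := hrow (r i)
    simp only [Mrr, Mrsr, if_neg hi] at h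
    rw [sum_ite_const i 0 1 (fun j => v (r j)), ← Finset.mul_sum, ← hA, ← hB] at h
    linarith
  -- identity row
  have h0 : A - a + B = 0 := by
    have h := hrow (r 0)
    simp only [Mrr, Mrsr, if_pos rfl, if_true, eq_self_iff_true, one_mul] at h
    rw [sum_ite_const 0 0 1 (fun j => v (r j)), ← hA, ← hB, ← ha] at h
    linarith
  -- structural identities
  have cardZ : (Finset.univ : Finset (ZMod n)).card = n := by
    simp [ZMod.card]
  have hAeq : A = a + (N - 1) * (A + 2 * B) := by
    conv_lhs => rw [hA]
    rw [← Finset.add_sum_erase _ _ (Finset.mem_univ (0 : ZMod n))]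
    have : ∑ i ∈ Finset.univ.erase (0 : ZMod n), v (r i)
        = ∑ i ∈ Finset.univ.erase (0 : ZMod n), (A + 2 * B) :=
      Finset.sum_congr rfl fun i hi => hvr i (Finset.mem_erase.mp hi).1
    rw [this, Finset.sum_const, Finset.card_erase_of_mem (Finset.mem_univ _), cardZ,
      nsmul_eq_mul]
    have h1 : (1 : ℕ) ≤ n := Nat.one_le_of_lt hn
    have : ((n - 1 : ℕ) : ℝ) = N - 1 := by
      rw [hNdef]; push_cast [Nat.cast_sub h1]; ring
    rw [this, ← ha]
  have hBeq : B = N * (A - a / 2 + B) := by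
    conv_lhs => rw [hB]
    rw [Finset.sum_congr rfl fun i _ => hvs i, Finset.sum_const, cardZ, nsmul_eq_mul]
  -- solve
  have e1 : (N - 1) * A + (2 * N - 1) * B = 0 := by
    have haAB : a = A + B := by linarith
    rw [haAB] at hAeq; linarith [hAeq]
  have e2 : N * A + (N - 2) * B = 0 := by
    have haAB : a = A + B := by linarith
    rw [haAB] at hBeq; nlinarith [hBeq]
  have key : (N ^ 2 + 2 * N - 2) * B = 0 := by linear_combination N * e1 - (N - 1) * e2
  have hfac : N ^ 2 + 2 * N - 2 > 0 := by nlinarith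
  have hB0 : B = 0 := by
    rcases mul_eq_zero.mp key with h | h
    · linarith
    · exact h
  have hA0 : A = 0 := by
    have hNne : N ≠ 0 := by linarith
    have hNA : N * A = 0 := by rw [hB0] at e2; linarith
    exact (mul_eq_zero.mp hNA).resolve_left hNne
  have ha0 : a = 0 := by linarith
  apply hv0
  funext x
  show v x = 0
  cases x with
  | r i =>
      by_cases hi : i = 0
      · subst hi; rw [← ha]; exact ha0
      · rw [hvr i hi, hA0, hB0]; ring
  | sr i => rw [hvs i, hA0, hB0, ha0]; ring
end

section
/- For the dicyclic group Dic_{4n} with n ≥ 3, the characteristic polynomial of the distance matrix of its enhanced power graph is (x+1)^{3n−2}(x+3)^{n−1}(x³ − (6n−5)x² − (8n² + 4n − 7)x − (6n − 3)). In particular this distance matrix is non-singular. -/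
open Polynomial

namespace EPG8

open QuaternionGroup Subgroup

attribute [-simp] QuaternionGroup.a_zero

variable {n : ℕ}

lemma hNN : ((n : ZMod (2*n)) + (n : ZMod (2*n))) = 0 := by
  have h : ((2*n : ℕ) : ZMod (2*n)) = 0 := ZMod.natCast_self _
  push_cast at h
  linear_combination h

lemma val_N [NeZero n] : (n : ZMod (2*n)).val = n :=
  ZMod.val_natCast_of_lt (by have := Nat.pos_of_ne_zero (NeZero.ne n); omega)

lemma hN0 [NeZero n] : (n : ZMod (2*n)) ≠ 0 := by
  intro h
  have h2 := val_N (n := n)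
  rw [h] at h2
  simp at h2
  exact NeZero.ne n h2.symm

lemma a_pow (m : ZMod (2*n)) (k : ℕ) :
    (a m : QuaternionGroup n) ^ k = a ((k : ZMod (2*n)) * m) := by
  induction k with
  | zero => simp [one_def]
  | succ k ih => rw [pow_succ, ih, a_mul_a]; congr 1; push_cast; ring

lemma a_inv (m : ZMod (2*n)) : (a m : QuaternionGroup n)⁻¹ = a (-m) := rfl

lemma a_zpow (m : ZMod (2*n)) (k : ℤ) : ∃ j, (a m : QuaternionGroup n) ^ k = a j := by
  rcases k with k | k
  · exact ⟨_, by rw [Int.ofNat_eq_coe, zpow_natCast, a_pow]⟩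
  · exact ⟨_, by rw [zpow_negSucc, a_pow, a_inv]⟩

lemma xa_not_mem_zpowers_a (i m : ZMod (2*n)) : (xa i : QuaternionGroup n) ∉ zpowers (a m) := by
  intro hmem
  rw [Subgroup.mem_zpowers_iff] at hmem
  obtain ⟨k, hk⟩ := hmem
  obtain ⟨j, hj⟩ := a_zpow m k
  rw [hj] at hk
  cases hk

lemma a_mem_zpowers_a_one [NeZero n] (i : ZMod (2*n)) :
    (a i : QuaternionGroup n) ∈ zpowers (a 1) := by
  haveI : NeZero (2*n) := ⟨by have := NeZero.ne n; omega⟩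
  rw [Subgroup.mem_zpowers_iff]
  refine ⟨(i.val : ℤ), ?_⟩
  rw [zpow_natCast, a_one_pow]
  congr 1
  exact ZMod.natCast_rightInverse i

lemma xa_pow_three (m : ZMod (2*n)) :
    (xa m : QuaternionGroup n) ^ 3 = xa (m + (n : ZMod (2*n))) := by
  have h3 : (xa m : QuaternionGroup n) ^ 3 = xa m ^ 2 * xa m := by rw [pow_succ]
  rw [h3, xa_sq, a_mul_xa]
  congr 1
  have h := hNN (n := n)
  linear_combination -h

lemma mem_zpowers_xa_iff [NeZero n] (m : ZMod (2*n)) (g : QuaternionGroup n) :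
    g ∈ zpowers (xa m) ↔
      g = 1 ∨ g = a (n : ZMod (2*n)) ∨ g = xa m ∨ g = xa (m + (n : ZMod (2*n))) := by
  constructor
  · intro hg
    rw [← mem_powers_iff_mem_zpowers, Submonoid.mem_powers_iff] at hg
    obtain ⟨k, hk⟩ := hg
    have h4 : orderOf (xa m : QuaternionGroup n) = 4 := orderOf_xa m
    have hmod := pow_mod_orderOf (x := (xa m : QuaternionGroup n)) (n := k)
    rw [h4] at hmod
    have hlt : k % 4 < 4 := Nat.mod_lt _ (by norm_num)
    rw [← hk, ← hmod]
    interval_cases h : (k % 4)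
    · left; simp
    · right; right; left; simp
    · right; left; rw [xa_sq]
    · right; right; right; rw [xa_pow_three]
  · rintro (rfl | rfl | rfl | rfl)
    · exact one_mem _
    · refine Subgroup.mem_zpowers_iff.mpr ⟨2, ?_⟩
      show (xa m : QuaternionGroup n) ^ (2:ℤ) = _
      rw [zpow_two, xa_mul_xa]
      congr 1
      ring
    · exact mem_zpowers _
    · refine Subgroup.mem_zpowers_iff.mpr ⟨3, ?_⟩
      show (xa m : QuaternionGroup n) ^ (3:ℤ) = _
      rw [show (3:ℤ) = ((3:ℕ):ℤ) by norm_num, zpow_natCast, xa_pow_three]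

section Adj

variable [NeZero n]
set_option linter.unusedSectionVars false

lemma adj_one {g : QuaternionGroup n} (hg : g ≠ 1) :
    (enhancedPowerGraph (QuaternionGroup n)).Adj 1 g :=
  ⟨fun h => hg h.symm, g, one_mem _, mem_zpowers g⟩

lemma adj_aa {i j : ZMod (2*n)} (h : i ≠ j) :
    (enhancedPowerGraph (QuaternionGroup n)).Adj (a i) (a j) :=
  ⟨by simp [h], a 1, a_mem_zpowers_a_one i, a_mem_zpowers_a_one j⟩

lemma adj_a_xa_iff {i j : ZMod (2*n)} :
    (enhancedPowerGraph (QuaternionGroup n)).Adj (a i) (xa j) ↔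
      i = 0 ∨ i = (n : ZMod (2*n)) := by
  constructor
  · rintro ⟨-, c, hc1, hc2⟩
    rcases c with m | m
    · exact absurd hc2 (xa_not_mem_zpowers_a _ _)
    · rw [mem_zpowers_xa_iff] at hc1
      rcases hc1 with h | h | h | h
      · left; rw [one_def] at h; exact (a.injEq _ _).mp h
      · right; exact (a.injEq _ _).mp h
      · exact absurd h (by simp)
      · exact absurd h (by simp)
  · rintro (rfl | rfl)
    · exact adj_one (by simp [one_def])
    · refine ⟨by simp, xa j, ?_, mem_zpowers _⟩
      rw [mem_zpowers_xa_iff]; tauto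

lemma adj_xa_xa_iff {i j : ZMod (2*n)} :
    (enhancedPowerGraph (QuaternionGroup n)).Adj (xa i) (xa j) ↔
      j = i + (n : ZMod (2*n)) := by
  constructor
  · rintro ⟨hne, c, hc1, hc2⟩
    rcases c with m | m
    · exact absurd hc1 (xa_not_mem_zpowers_a _ _)
    · rw [mem_zpowers_xa_iff] at hc1 hc2
      have hne' : i ≠ j := by simpa using hne
      have hNN' := hNN (n := n)
      rcases hc1 with h1 | h1 | h1 | h1
      · exact absurd h1 (by simp [one_def])
      · exact absurd h1 (by simp)
      all_goals rcases hc2 with h2 | h2 | h2 | h2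
      · exact absurd h2 (by simp [one_def])
      · exact absurd h2 (by simp)
      · rw [xa.injEq] at h1 h2; subst h1; subst h2; exact absurd rfl hne'
      · rw [xa.injEq] at h1 h2; subst h1; subst h2; rfl
      · exact absurd h2 (by simp [one_def])
      · exact absurd h2 (by simp)
      · rw [xa.injEq] at h1 h2; subst h1; subst h2; linear_combination -hNN'
      · rw [xa.injEq] at h1 h2; subst h1; subst h2; exact absurd rfl hne'
  · rintro rfl
    refine ⟨?_, xa i, mem_zpowers _, ?_⟩
    · simp only [ne_eq, xa.injEq]
      intro h
      exact hN0 (n := n) (by linear_combination -h)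
    · rw [mem_zpowers_xa_iff]; tauto

lemma dist_eq_two {u v : QuaternionGroup n} (hne : u ≠ v)
    (hnadj : ¬ (enhancedPowerGraph (QuaternionGroup n)).Adj u v)
    (hu : u ≠ 1) (hv : v ≠ 1) : (enhancedPowerGraph (QuaternionGroup n)).dist u v = 2 := by
  have h1 : (enhancedPowerGraph (QuaternionGroup n)).Adj u 1 := (adj_one hu).symm
  have h2 : (enhancedPowerGraph (QuaternionGroup n)).Adj 1 v := adj_one hv
  let w : (enhancedPowerGraph (QuaternionGroup n)).Walk u v := .cons h1 (.cons h2 .nil)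
  have hle : (enhancedPowerGraph (QuaternionGroup n)).dist u v ≤ 2 := by
    simpa [w] using SimpleGraph.dist_le w
  have h0 : (enhancedPowerGraph (QuaternionGroup n)).dist u v ≠ 0 := by
    intro hz
    rw [SimpleGraph.dist_eq_zero_iff_eq_or_not_reachable] at hz
    rcases hz with hz | hz
    · exact hne hz
    · exact hz ⟨w⟩
  have h1' : (enhancedPowerGraph (QuaternionGroup n)).dist u v ≠ 1 := fun h =>
    hnadj (SimpleGraph.dist_eq_one_iff_adj.mp h)
  omega

lemma dist_adj {u v : QuaternionGroup n}
    (h : (enhancedPowerGraph (QuaternionGroup n)).Adj u v) :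
    (enhancedPowerGraph (QuaternionGroup n)).dist u v = 1 :=
  SimpleGraph.dist_eq_one_iff_adj.mpr h

lemma D_aa (i j : ZMod (2*n)) :
    distMatrix (enhancedPowerGraph (QuaternionGroup n)) (a i) (a j)
      = if i = j then 0 else 1 := by
  unfold distMatrix
  split_ifs with h
  · subst h; simp
  · rw [dist_adj (adj_aa h)]; norm_num

lemma D_a_xa (i j : ZMod (2*n)) :
    distMatrix (enhancedPowerGraph (QuaternionGroup n)) (a i) (xa j)
      = if i = 0 ∨ i = (n : ZMod (2*n)) then 1 else 2 := by
  unfold distMatrix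
  split_ifs with h
  · rw [dist_adj (adj_a_xa_iff.mpr h)]; norm_num
  · push_neg at h
    have hd : (enhancedPowerGraph (QuaternionGroup n)).dist (a i) (xa j) = 2 := by
      refine dist_eq_two (by simp) ?_ ?_ ?_
      · intro hadj
        rcases adj_a_xa_iff.mp hadj with h1 | h1
        · exact h.1 h1
        · exact h.2 h1
      · rw [one_def]; simp [h.1]
      · rw [one_def]; simp
    rw [hd]; norm_num

lemma D_xa_a (i j : ZMod (2*n)) :
    distMatrix (enhancedPowerGraph (QuaternionGroup n)) (xa i) (a j)
      = if j = 0 ∨ j = (n : ZMod (2*n)) then 1 else 2 := by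
  have hsymm : distMatrix (enhancedPowerGraph (QuaternionGroup n)) (xa i) (a j)
      = distMatrix (enhancedPowerGraph (QuaternionGroup n)) (a j) (xa i) := by
    unfold distMatrix; rw [SimpleGraph.dist_comm]
  rw [hsymm, D_a_xa]

lemma D_xa_xa (i j : ZMod (2*n)) :
    distMatrix (enhancedPowerGraph (QuaternionGroup n)) (xa i) (xa j)
      = if i = j then 0 else if j = i + (n : ZMod (2*n)) then 1 else 2 := by
  unfold distMatrix
  split_ifs with h h2
  · subst h; simp
  · rw [dist_adj (adj_xa_xa_iff.mpr h2)]; norm_num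
  · have hd : (enhancedPowerGraph (QuaternionGroup n)).dist (xa i) (xa j) = 2 := by
      refine dist_eq_two (by simp [h]) (fun hadj => h2 (adj_xa_xa_iff.mp hadj)) ?_ ?_ <;>
        (rw [one_def]; simp)
    rw [hd]; norm_num

end Adj

instance h2n {n : ℕ} [NeZero n] : NeZero (2*n) := ⟨by have := NeZero.ne n; omega⟩

section BasisDef

variable (n : ℕ) [NeZero n]

/-- indices for the a-difference eigenvectors -/
def Ta : Finset (ZMod (2*n)) := ({0, 1, (n : ZMod (2*n))} : Finset (ZMod (2*n)))ᶜ
/-- indices for the torsion part of `vT` -/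
def Ta' : Finset (ZMod (2*n)) := ({0, (n : ZMod (2*n))} : Finset (ZMod (2*n)))ᶜ
/-- indices for xa-difference eigenvectors -/
def Tm : Finset (ZMod (2*n)) := Finset.univ.filter (fun i => i.val < n)
/-- indices for the (-3)-eigenvectors -/
def Tp : Finset (ZMod (2*n)) := (Tm n).erase 0

/-- standard basis vector -/
noncomputable def es (g : QuaternionGroup n) : QuaternionGroup n → ℝ := Pi.single g 1

noncomputable def vS : QuaternionGroup n → ℝ := es n (a 0) + es n (a (n : ZMod (2*n)))
noncomputable def vT : QuaternionGroup n → ℝ := ∑ j ∈ Ta' n, es n (a j)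
noncomputable def vU : QuaternionGroup n → ℝ := ∑ i : ZMod (2*n), es n (xa i)

abbrev IxA := {j : ZMod (2*n) // j ∈ Ta n}
abbrev IxM := {i : ZMod (2*n) // i ∈ Tm n}
abbrev IxP := {p : ZMod (2*n) // p ∈ Tp n}
abbrev IxE := (IxA n ⊕ (Unit ⊕ IxM n)) ⊕ IxP n
abbrev Ix := IxE n ⊕ Fin 3

/-- the candidate basis -/
noncomputable def bv : Ix n → (QuaternionGroup n → ℝ)
  | .inl (.inl (.inl j)) => es n (a j.1) - es n (a 1)
  | .inl (.inl (.inr (.inl _))) => es n (a 0) - es n (a (n : ZMod (2*n)))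
  | .inl (.inl (.inr (.inr i))) => es n (xa i.1) - es n (xa (i.1 + (n : ZMod (2*n))))
  | .inl (.inr p) =>
      es n (xa p.1) + es n (xa (p.1 + (n : ZMod (2*n))))
        - es n (xa 0) - es n (xa (n : ZMod (2*n)))
  | .inr t => ![vS n, vT n, vU n] t

noncomputable def dE : IxE n → ℝ := Sum.elim (fun _ => -1) (fun _ => -3)

noncomputable def B3 : Matrix (Fin 3) (Fin 3) ℝ :=
  !![1, 2*(n:ℝ)-2, 2*(n:ℝ); 2, 2*(n:ℝ)-3, 4*(n:ℝ); 2, 4*(n:ℝ)-4, 4*(n:ℝ)-3]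

end BasisDef

section Cards

variable {n : ℕ} [NeZero n]
set_option linter.unusedSectionVars false

lemma val_one' (hn : 3 ≤ n) : (1 : ZMod (2*n)).val = 1 := by
  have : ((1:ℕ) : ZMod (2*n)).val = 1 := ZMod.val_natCast_of_lt (by omega)
  simpa using this

lemma h01 (hn : 3 ≤ n) : (0 : ZMod (2*n)) ≠ 1 := by
  intro h
  have := val_one' (n := n) hn
  rw [← h] at this
  simp at this

lemma h1N (hn : 3 ≤ n) : (1 : ZMod (2*n)) ≠ (n : ZMod (2*n)) := by
  intro h
  have h1 := val_one' (n := n) hn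
  have h2 := val_N (n := n)
  rw [h] at h1
  omega

lemma card_ZMod2n : Fintype.card (ZMod (2*n)) = 2*n := ZMod.card _

lemma card_Ta (hn : 3 ≤ n) : (Ta n).card = 2*n - 3 := by
  rw [Ta, Finset.card_compl, card_ZMod2n]
  have hc : ({0, 1, (n : ZMod (2*n))} : Finset (ZMod (2*n))).card = 3 := by
    rw [Finset.card_insert_of_notMem (by simp [h01 (n:=n) hn, Ne.symm (hN0 (n:=n))]),
      Finset.card_insert_of_notMem (by simp [h1N (n:=n) hn]), Finset.card_singleton]
  rw [hc]

lemma card_Ta' (hn : 3 ≤ n) : (Ta' n).card = 2*n - 2 := by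
  rw [Ta', Finset.card_compl, card_ZMod2n]
  have hc : ({0, (n : ZMod (2*n))} : Finset (ZMod (2*n))).card = 2 := by
    rw [Finset.card_insert_of_notMem (by simp [Ne.symm (hN0 (n:=n))]), Finset.card_singleton]
  rw [hc]

lemma card_Tm : (Tm n).card = n := by
  have h : (Tm n).card = (Finset.range n).card := by
    refine Finset.card_nbij' (fun i => i.val) (fun k => ((k : ℕ) : ZMod (2*n))) ?_ ?_ ?_ ?_
    · intro i hi
      simp only [Finset.mem_coe, Tm, Finset.mem_filter] at hi
      simpa using hi.2
    · intro k hk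
      simp only [Finset.mem_coe, Finset.mem_range] at hk
      simp only [Finset.mem_coe, Tm, Finset.mem_filter, Finset.mem_univ, true_and]
      rw [ZMod.val_natCast_of_lt (by have := NeZero.ne n; omega)]
      exact hk
    · intro i _
      exact ZMod.natCast_rightInverse i
    · intro k hk
      simp only [Finset.mem_coe, Finset.mem_range] at hk
      exact ZMod.val_natCast_of_lt (by omega)
  rw [h, Finset.card_range]

lemma zero_mem_Tm : (0 : ZMod (2*n)) ∈ Tm n := by
  simp [Tm, ZMod.val_zero, Nat.pos_of_ne_zero (NeZero.ne n)]

lemma card_Tp : (Tp n).card = n - 1 := by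
  rw [Tp, Finset.card_erase_of_mem zero_mem_Tm, card_Tm]

lemma card_Ix (hn : 3 ≤ n) : Fintype.card (Ix n) = 4*n := by
  simp only [Ix, IxE, Fintype.card_sum, Fintype.card_coe, Fintype.card_unit, Fintype.card_fin]
  rw [card_Ta (n:=n) hn, card_Tm, card_Tp]
  omega

end Cards

section Action

variable {n : ℕ} [NeZero n]
set_option linter.unusedSectionVars false
set_option maxHeartbeats 1000000

lemma swapN {x y : ZMod (2*n)} :
    x = y + (n : ZMod (2*n)) ↔ y = x + (n : ZMod (2*n)) := by
  have h := hNN (n := n)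
  constructor <;> intro hxy <;> linear_combination -hxy - h

lemma es_apply (g u : QuaternionGroup n) : es n g u = if u = g then 1 else 0 :=
  Pi.single_apply g 1 u

lemma mem_Ta' {k : ZMod (2*n)} : k ∈ Ta' n ↔ ¬(k = 0 ∨ k = (n : ZMod (2*n))) := by
  simp [Ta']

lemma mulVec_es (D : Matrix (QuaternionGroup n) (QuaternionGroup n) ℝ) (g : QuaternionGroup n) :
    D.mulVec (es n g) = fun u => D u g := by
  funext u
  simp [es, Matrix.mulVec_single]

lemma L_A (hn : 3 ≤ n) {j : ZMod (2*n)} (hj0 : j ≠ 0) (hjN : j ≠ (n : ZMod (2*n))) :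
    (distMatrix (enhancedPowerGraph (QuaternionGroup n))).mulVec (es n (a j) - es n (a 1))
      = (-1 : ℝ) • (es n (a j) - es n (a 1)) := by
  rw [Matrix.mulVec_sub, mulVec_es, mulVec_es]
  funext u
  rcases u with k | k
  · simp only [Pi.sub_apply, Pi.smul_apply, smul_eq_mul, D_aa, es_apply, a.injEq]
    split_ifs <;> norm_num
  · simp only [Pi.sub_apply, Pi.smul_apply, smul_eq_mul, D_xa_a, es_apply]
    have h10 : ¬((1 : ZMod (2*n)) = 0 ∨ (1 : ZMod (2*n)) = (n : ZMod (2*n))) := by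
      rintro (h | h)
      · exact h01 (n:=n) hn h.symm
      · exact h1N (n:=n) hn h
    have hj : ¬(j = 0 ∨ j = (n : ZMod (2*n))) := by tauto
    simp [h10, hj]

lemma L_W (hn : 3 ≤ n) :
    (distMatrix (enhancedPowerGraph (QuaternionGroup n))).mulVec
        (es n (a 0) - es n (a (n : ZMod (2*n))))
      = (-1 : ℝ) • (es n (a 0) - es n (a (n : ZMod (2*n)))) := by
  rw [Matrix.mulVec_sub, mulVec_es, mulVec_es]
  funext u
  rcases u with k | k
  · simp only [Pi.sub_apply, Pi.smul_apply, smul_eq_mul, D_aa, es_apply, a.injEq]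
    split_ifs <;> norm_num
  · simp only [Pi.sub_apply, Pi.smul_apply, smul_eq_mul, D_xa_a, es_apply]
    simp

lemma L_M (hn : 3 ≤ n) (i : ZMod (2*n)) :
    (distMatrix (enhancedPowerGraph (QuaternionGroup n))).mulVec
        (es n (xa i) - es n (xa (i + (n : ZMod (2*n)))))
      = (-1 : ℝ) • (es n (xa i) - es n (xa (i + (n : ZMod (2*n))))) := by
  have hNZ := hN0 (n := n)
  rw [Matrix.mulVec_sub, mulVec_es, mulVec_es]
  funext u
  rcases u with k | k
  · simp only [Pi.sub_apply, Pi.smul_apply, smul_eq_mul, D_a_xa, es_apply]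
    split_ifs <;> norm_num
  · simp only [Pi.sub_apply, Pi.smul_apply, smul_eq_mul, D_xa_xa, es_apply, xa.injEq]
    have hNN' := hNN (n := n)
    by_cases h1 : k = i
    · subst h1
      have f1 : ¬ k = k + (n : ZMod (2*n)) := fun h => hNZ (by linear_combination -h)
      simp [f1]
    · by_cases h2 : k = i + (n : ZMod (2*n))
      · subst h2
        have f1 : ¬ i + (n : ZMod (2*n)) = i := fun h => hNZ (by linear_combination h)
        simp [add_assoc, hNN', f1]
      · have c3 : ¬ i = k + (n : ZMod (2*n)) := fun h => h2 (swapN.mp h)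
        have c4 : ¬ i + (n : ZMod (2*n)) = k + (n : ZMod (2*n)) := fun h =>
          h1 ((add_left_inj _).mp h).symm
        simp [h1, h2, c3, c4]

lemma L_P (hn : 3 ≤ n) {p : ZMod (2*n)} (hp0 : p ≠ 0) (hpN : p ≠ (n : ZMod (2*n))) :
    (distMatrix (enhancedPowerGraph (QuaternionGroup n))).mulVec
        (es n (xa p) + es n (xa (p + (n : ZMod (2*n))))
          - es n (xa 0) - es n (xa (n : ZMod (2*n))))
      = (-3 : ℝ) • (es n (xa p) + es n (xa (p + (n : ZMod (2*n))))
          - es n (xa 0) - es n (xa (n : ZMod (2*n)))) := by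
  have hNZ := hN0 (n := n)
  have hNN' := hNN (n := n)
  rw [Matrix.mulVec_sub, Matrix.mulVec_sub, Matrix.mulVec_add, mulVec_es, mulVec_es, mulVec_es,
    mulVec_es]
  funext u
  rcases u with k | k
  · simp only [Pi.sub_apply, Pi.add_apply, Pi.smul_apply, smul_eq_mul, D_a_xa, es_apply]
    split_ifs <;> norm_num
  · simp only [Pi.sub_apply, Pi.add_apply, Pi.smul_apply, smul_eq_mul, D_xa_xa, es_apply,
      xa.injEq]
    by_cases h1 : k = p
    · subst h1
      have f1 : ¬ k = k + (n : ZMod (2*n)) := fun h => hNZ (by linear_combination -h)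
      have f2 : ¬ (0 : ZMod (2*n)) = k + (n : ZMod (2*n)) := fun h =>
        hpN (by linear_combination -h - hNN')
      have f3 : ¬ (n : ZMod (2*n)) = k + (n : ZMod (2*n)) := fun h =>
        hp0 (by linear_combination -h)
      simp [hp0, hpN, f1, f2, f3]
      norm_num
    · by_cases h2 : k = p + (n : ZMod (2*n))
      · subst h2
        have g1 : ¬ p + (n : ZMod (2*n)) = p := fun h => hNZ (by linear_combination h)
        have g4 : ¬ p + (n : ZMod (2*n)) = 0 := fun h => hpN (by linear_combination h - hNN')
        have g6 : ¬ p + (n : ZMod (2*n)) = (n : ZMod (2*n)) := fun h =>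
          hp0 (by linear_combination h)
        have g5 : ¬ (0 : ZMod (2*n)) = p := fun h => hp0 h.symm
        have g7 : ¬ (n : ZMod (2*n)) = p := fun h => hpN h.symm
        simp [add_assoc, hNN', g1, g4, g6, g5, g7]
        norm_num
      · by_cases h3 : k = 0
        · subst h3
          have f2 : ¬ p = (n : ZMod (2*n)) := hpN
          have f4 : ¬ p + (n : ZMod (2*n)) = (n : ZMod (2*n)) := fun h =>
            hp0 (by linear_combination h)
          have f5 : ¬ (0 : ZMod (2*n)) = p := fun h => hp0 h.symm
          have f6 : ¬ (0 : ZMod (2*n)) = (n : ZMod (2*n)) := Ne.symm hNZ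
          have f7 : ¬ (0 : ZMod (2*n)) = p + (n : ZMod (2*n)) := fun h =>
            hpN (by linear_combination -h - hNN')
          simp [f2, f4, f5, f6, f7, hp0]
          norm_num
        · by_cases h4 : k = (n : ZMod (2*n))
          · subst h4
            have f1 : ¬ (n : ZMod (2*n)) = p := fun h => hpN h.symm
            have f2 : ¬ (n : ZMod (2*n)) = p + (n : ZMod (2*n)) := fun h =>
              hp0 (by linear_combination -h)
            have f3 : ¬ (n : ZMod (2*n)) = 0 := hNZ
            have f4 : ¬ p + (n : ZMod (2*n)) = 0 := fun h =>
              hpN (by linear_combination h - hNN')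
            have f5 : ¬ p = 0 := hp0
            simp [add_assoc, hNN', f1, f2, f3, f4, f5]
            norm_num
          · have c1 : ¬ p = k + (n : ZMod (2*n)) := fun h => h2 (swapN.mp h)
            have c2 : ¬ p + (n : ZMod (2*n)) = k + (n : ZMod (2*n)) := fun h =>
              h1 ((add_left_inj _).mp h).symm
            have c3 : ¬ (0 : ZMod (2*n)) = k + (n : ZMod (2*n)) := fun h =>
              h4 (by linear_combination -h - hNN')
            have c4 : ¬ (n : ZMod (2*n)) = k + (n : ZMod (2*n)) := fun h =>
              h3 (by linear_combination -h)
            simp [h1, h2, h3, h4, c1, c2, c3, c4]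

end Action

section ActionDense

variable {n : ℕ} [NeZero n]
set_option linter.unusedSectionVars false
set_option maxHeartbeats 1000000

lemma vS_a (k : ZMod (2*n)) :
    vS n (a k) = (if k = 0 then 1 else 0) + (if k = (n : ZMod (2*n)) then 1 else 0) := by
  simp [vS, es_apply]

lemma vS_xa (k : ZMod (2*n)) : vS n (xa k) = 0 := by
  simp [vS, es_apply]

lemma vT_a (k : ZMod (2*n)) : vT n (a k) = if k ∈ Ta' n then 1 else 0 := by
  simp [vT, Finset.sum_apply, es_apply, a.injEq, Finset.sum_ite_eq]

lemma vT_xa (k : ZMod (2*n)) : vT n (xa k) = 0 := by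
  simp [vT, Finset.sum_apply, es_apply]

lemma vU_a (k : ZMod (2*n)) : vU n (a k) = 0 := by
  simp [vU, Finset.sum_apply, es_apply]

lemma vU_xa (k : ZMod (2*n)) : vU n (xa k) = 1 := by
  simp [vU, Finset.sum_apply, es_apply, xa.injEq, Finset.sum_ite_eq]

lemma L_S (hn : 3 ≤ n) :
    (distMatrix (enhancedPowerGraph (QuaternionGroup n))).mulVec (vS n)
      = vS n + (2:ℝ) • vT n + (2:ℝ) • vU n := by
  have hNZ := hN0 (n := n)
  conv_lhs => rw [vS]
  rw [Matrix.mulVec_add, mulVec_es, mulVec_es]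
  funext u
  rcases u with k | k
  · simp only [Pi.add_apply, Pi.smul_apply, smul_eq_mul, D_aa, vS_a, vT_a, vU_a, mem_Ta']
    by_cases hk0 : k = 0 <;> by_cases hkN : k = (n : ZMod (2*n))
    · exact absurd (hk0 ▸ hkN : (0:ZMod (2*n)) = (n : ZMod (2*n))) (Ne.symm hNZ)
    · simp [hk0, hkN, Ne.symm hNZ]
    · simp [hk0, hkN, hNZ]
    · simp [hk0, hkN]
      norm_num
  · simp only [Pi.add_apply, Pi.smul_apply, smul_eq_mul, D_xa_a, vS_xa, vT_xa, vU_xa]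
    norm_num

lemma L_T (hn : 3 ≤ n) :
    (distMatrix (enhancedPowerGraph (QuaternionGroup n))).mulVec (vT n)
      = (2*(n:ℝ)-2) • vS n + (2*(n:ℝ)-3) • vT n + (4*(n:ℝ)-4) • vU n := by
  have hNZ := hN0 (n := n)
  have hcol : (distMatrix (enhancedPowerGraph (QuaternionGroup n))).mulVec (vT n)
      = ∑ j ∈ Ta' n, fun u => distMatrix (enhancedPowerGraph (QuaternionGroup n)) u (a j) := by
    rw [vT, ← Matrix.mulVecLin_apply, map_sum]
    simp only [Matrix.mulVecLin_apply, mulVec_es]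
  funext u
  rw [hcol, Finset.sum_apply]
  rcases u with k | k
  · simp only [Pi.add_apply, Pi.smul_apply, smul_eq_mul, D_aa, vS_a, vT_a, vU_a]
    have hsplit : ∀ j ∈ Ta' n, (if k = j then (0:ℝ) else 1)
        = 1 - (if k = j then 1 else 0) := by
      intro j _; split_ifs <;> norm_num
    rw [Finset.sum_congr rfl hsplit, Finset.sum_sub_distrib, Finset.sum_const,
      Finset.sum_ite_eq, card_Ta' (n := n) hn]
    have hcast : (((2*n - 2 : ℕ)) : ℝ) = 2*(n:ℝ) - 2 := by
      push_cast [Nat.cast_sub (by omega : 2 ≤ 2*n)]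
      ring
    by_cases hk : k ∈ Ta' n
    · have := mem_Ta' (n := n) (k := k) |>.mp hk
      push_neg at this
      simp [hk, this.1, this.2, hcast, nsmul_eq_mul]
      ring
    · have hor : k = 0 ∨ k = (n : ZMod (2*n)) := by
        rw [mem_Ta'] at hk
        tauto
      rcases hor with h | h
      · subst h
        simp [hk, Ne.symm hNZ, hcast, nsmul_eq_mul]
      · subst h
        simp [hk, hNZ, hcast, nsmul_eq_mul]
  · simp only [Pi.add_apply, Pi.smul_apply, smul_eq_mul, D_xa_a, vS_xa, vT_xa, vU_xa]
    have hconst : ∀ j ∈ Ta' n, (if j = 0 ∨ j = (n : ZMod (2*n)) then (1:ℝ) else 2) = 2 := by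
      intro j hj
      rw [if_neg (mem_Ta' (n := n) |>.mp hj)]
    rw [Finset.sum_congr rfl hconst, Finset.sum_const, card_Ta' (n := n) hn]
    have hcast : (((2*n - 2 : ℕ)) : ℝ) = 2*(n:ℝ) - 2 := by
      push_cast [Nat.cast_sub (by omega : 2 ≤ 2*n)]
      ring
    simp [nsmul_eq_mul, hcast]
    ring

lemma L_U (hn : 3 ≤ n) :
    (distMatrix (enhancedPowerGraph (QuaternionGroup n))).mulVec (vU n)
      = (2*(n:ℝ)) • vS n + (4*(n:ℝ)) • vT n + (4*(n:ℝ)-3) • vU n := by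
  have hNZ := hN0 (n := n)
  have hcol : (distMatrix (enhancedPowerGraph (QuaternionGroup n))).mulVec (vU n)
      = ∑ i : ZMod (2*n), fun u => distMatrix (enhancedPowerGraph (QuaternionGroup n)) u (xa i) := by
    rw [vU, ← Matrix.mulVecLin_apply, map_sum]
    simp only [Matrix.mulVecLin_apply, mulVec_es]
  funext u
  rw [hcol, Finset.sum_apply]
  rcases u with k | k
  · simp only [Pi.add_apply, Pi.smul_apply, smul_eq_mul, D_a_xa, vS_a, vT_a, vU_a, mem_Ta']
    rw [Finset.sum_const, Finset.card_univ, card_ZMod2n]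
    by_cases hk0 : k = 0 <;> by_cases hkN : k = (n : ZMod (2*n))
    · exact absurd (hk0 ▸ hkN : (0:ZMod (2*n)) = (n : ZMod (2*n))) (Ne.symm hNZ)
    · subst hk0
      simp only [if_pos rfl, if_neg hkN, if_neg (Ne.symm hNZ)]
      simp [nsmul_eq_mul]
      try push_cast
      try ring
    · subst hkN
      simp only [if_neg hk0, if_pos rfl, if_neg hNZ]
      simp [nsmul_eq_mul, hNZ]
      try push_cast
      try ring
    · simp [hk0, hkN, nsmul_eq_mul]
      try push_cast
      try ring
  · simp only [Pi.add_apply, Pi.smul_apply, smul_eq_mul, D_xa_xa, vS_xa, vT_xa, vU_xa]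
    have hsplit : ∀ i ∈ Finset.univ, (if k = i then (0:ℝ) else if i = k + (n : ZMod (2*n)) then 1 else 2)
        = 2 - (if k = i then 2 else 0) - (if i = k + (n : ZMod (2*n)) then 1 else 0) := by
      intro i _
      by_cases h1 : k = i
      · subst h1
        rw [if_pos rfl, if_pos rfl, if_neg (fun h => hNZ (by linear_combination -h))]
        norm_num
      · by_cases h2 : i = k + (n : ZMod (2*n)) <;> simp [h1, h2, hNZ] <;> norm_num
    rw [Finset.sum_congr rfl hsplit, Finset.sum_sub_distrib, Finset.sum_sub_distrib,
      Finset.sum_const, Finset.sum_ite_eq, Finset.sum_ite_eq', Finset.card_univ, card_ZMod2n]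
    simp [nsmul_eq_mul]
    push_cast
    ring

end ActionDense

section Span

variable {n : ℕ} [NeZero n]
set_option linter.unusedSectionVars false
set_option maxHeartbeats 1000000

lemma mem_Ta {k : ZMod (2*n)} :
    k ∈ Ta n ↔ ¬(k = 0 ∨ k = 1 ∨ k = (n : ZMod (2*n))) := by
  simp [Ta]

lemma Ta'_eq (hn : 3 ≤ n) : Ta' n = insert 1 (Ta n) := by
  have h1 : (1 : ZMod (2*n)) ≠ 0 := Ne.symm (h01 (n := n) hn)
  have h2 := h1N (n := n) hn
  ext j
  simp only [mem_Ta', mem_Ta, Finset.mem_insert]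
  by_cases h : j = 1
  · simp [h, h1, h2]
  · simp [h]

lemma one_not_mem_Ta : (1 : ZMod (2*n)) ∉ Ta n := by
  rw [mem_Ta]
  tauto

lemma mem_Tm {k : ZMod (2*n)} : k ∈ Tm n ↔ k.val < n := by
  simp [Tm]

lemma mem_Tp {k : ZMod (2*n)} : k ∈ Tp n ↔ k ≠ 0 ∧ k.val < n := by
  simp [Tp, mem_Tm, and_comm]

lemma Tp_ne_N (hn : 3 ≤ n) {p : ZMod (2*n)} (hp : p ∈ Tp n) : p ≠ (n : ZMod (2*n)) := by
  intro h
  rw [mem_Tp] at hp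
  rw [h, val_N] at hp
  omega

lemma Tm_eq : Tm n = insert 0 (Tp n) := by
  rw [Tp, Finset.insert_erase zero_mem_Tm]

lemma sum_univ_pair (f : ZMod (2*n) → (QuaternionGroup n → ℝ)) :
    ∑ i : ZMod (2*n), f i = ∑ i ∈ Tm n, (f i + f (i + (n : ZMod (2*n)))) := by
  have hNN' := hNN (n := n)
  rw [Finset.sum_add_distrib]
  rw [← Finset.sum_compl_add_sum (Tm n) f, add_comm]
  congr 1
  refine Finset.sum_nbij' (fun i => i + (n : ZMod (2*n))) (fun i => i + (n : ZMod (2*n)))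
    ?_ ?_ ?_ ?_ ?_
  · intro i hi
    rw [Finset.mem_compl, mem_Tm] at hi
    rw [mem_Tm]
    have hvi : i.val < 2*n := i.val_lt
    have hv : (i + (n : ZMod (2*n))).val = (i.val + n) % (2*n) := by
      rw [ZMod.val_add, val_N]
    rw [hv, Nat.mod_eq_sub_mod (by omega), Nat.mod_eq_of_lt (by omega)]
    omega
  · intro i hi
    rw [mem_Tm] at hi
    simp only [Finset.mem_compl, mem_Tm, not_lt]
    have hv : (i + (n : ZMod (2*n))).val = i.val + n := by
      rw [ZMod.val_add, val_N, Nat.mod_eq_of_lt (by omega)]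
    omega
  · intro i _
    linear_combination hNN'
  · intro i _
    linear_combination hNN'
  · intro i _
    exact (congrArg f (show i + (n : ZMod (2*n)) + (n : ZMod (2*n)) = i by
      linear_combination hNN')).symm

lemma span_bv (hn : 3 ≤ n) :
    ⊤ ≤ Submodule.span ℝ (Set.range (bv n)) := by
  have hNZ := hN0 (n := n)
  have hNN' := hNN (n := n)
  set W := Submodule.span ℝ (Set.range (bv n)) with hW
  have hmem : ∀ i, bv n i ∈ W := fun i => Submodule.subset_span (Set.mem_range_self i)
  have scale : ∀ (c : ℝ) (x : QuaternionGroup n → ℝ), c ≠ 0 → c • x ∈ W → x ∈ W := by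
    intro c x hc hx
    have h2 := W.smul_mem (c⁻¹ : ℝ) hx
    rwa [smul_smul, inv_mul_cancel₀ hc, one_smul] at h2
  have hvS : vS n ∈ W := by simpa [bv] using hmem (Sum.inr 0)
  have hvT : vT n ∈ W := by simpa [bv] using hmem (Sum.inr 1)
  have hvU : vU n ∈ W := by simpa [bv] using hmem (Sum.inr 2)
  have hw0 : es n (a 0) - es n (a (n : ZMod (2*n))) ∈ W := by
    simpa [bv] using hmem (Sum.inl (Sum.inl (Sum.inr (Sum.inl ()))))
  have hA : ∀ j, j ∈ Ta n → es n (a j) - es n (a 1) ∈ W := fun j hj => by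
    simpa [bv] using hmem (Sum.inl (Sum.inl (Sum.inl ⟨j, hj⟩)))
  have hM : ∀ i, i ∈ Tm n →
      es n (xa i) - es n (xa (i + (n : ZMod (2*n)))) ∈ W := fun i hi => by
    simpa [bv] using hmem (Sum.inl (Sum.inl (Sum.inr (Sum.inr ⟨i, hi⟩))))
  have hP : ∀ p, p ∈ Tp n →
      es n (xa p) + es n (xa (p + (n : ZMod (2*n))))
        - es n (xa 0) - es n (xa (n : ZMod (2*n))) ∈ W := fun p hp => by
    simpa [bv] using hmem (Sum.inl (Sum.inr ⟨p, hp⟩))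
  -- corner a-vectors
  have he0 : es n (a 0) ∈ W := by
    refine scale 2 _ (by norm_num) ?_
    have heq : (2:ℝ) • es n (a 0)
        = vS n + (es n (a 0) - es n (a (n : ZMod (2*n)))) := by rw [vS]; module
    rw [heq]; exact W.add_mem hvS hw0
  have heN : es n (a (n : ZMod (2*n))) ∈ W := by
    refine scale 2 _ (by norm_num) ?_
    have heq : (2:ℝ) • es n (a (n : ZMod (2*n)))
        = vS n - (es n (a 0) - es n (a (n : ZMod (2*n)))) := by rw [vS]; module
    rw [heq]; exact W.sub_mem hvS hw0
  -- es (a 1)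
  have hn2 : (2*(n:ℝ) - 2) ≠ 0 := by
    intro h
    have h1 : (n:ℝ) = 1 := by linarith
    have h2 : n = 1 := by exact_mod_cast h1
    omega
  have hsumTa : ∑ j ∈ Ta n, es n (a j) = vT n - es n (a 1) := by
    rw [vT, Ta'_eq (n := n) hn, Finset.sum_insert one_not_mem_Ta]
    abel
  have hsum2 : ∑ j ∈ Ta n, (es n (a j) - es n (a 1))
      = vT n - (2*(n:ℝ) - 2) • es n (a 1) := by
    rw [Finset.sum_sub_distrib, hsumTa, Finset.sum_const, card_Ta (n := n) hn,
      ← Nat.cast_smul_eq_nsmul ℝ, Nat.cast_sub (by omega : 3 ≤ 2*n)]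
    push_cast
    module
  have he1 : es n (a 1) ∈ W := by
    refine scale (2*(n:ℝ) - 2) _ hn2 ?_
    have hmem2 : vT n - (2*(n:ℝ) - 2) • es n (a 1) ∈ W := by
      rw [← hsum2]
      exact Submodule.sum_mem _ (fun j hj => hA j hj)
    have heq : (2*(n:ℝ) - 2) • es n (a 1)
        = vT n - (vT n - (2*(n:ℝ) - 2) • es n (a 1)) := by module
    rw [heq]
    exact W.sub_mem hvT hmem2
  -- all a-vectors
  have hea : ∀ k : ZMod (2*n), es n (a k) ∈ W := by
    intro k
    by_cases hk0 : k = 0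
    · rw [hk0]; exact he0
    by_cases hkN : k = (n : ZMod (2*n))
    · rw [hkN]; exact heN
    by_cases hk1 : k = 1
    · rw [hk1]; exact he1
    have hk : k ∈ Ta n := mem_Ta.mpr (by tauto)
    have heq : es n (a k) = (es n (a k) - es n (a 1)) + es n (a 1) := by module
    rw [heq]
    exact W.add_mem (hA k hk) he1
  -- the symmetric pair s0
  have hpair : ∀ i, es n (xa i) + es n (xa (i + (n : ZMod (2*n)))) = fun u =>
      es n (xa i) u + es n (xa (i + (n : ZMod (2*n)))) u := fun i => rfl
  have hvU_split : vU n = (es n (xa 0) + es n (xa (n : ZMod (2*n))))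
      + ∑ p ∈ Tp n, (es n (xa p) + es n (xa (p + (n : ZMod (2*n))))) := by
    rw [vU, sum_univ_pair, Tm_eq, Finset.sum_insert (by simp [mem_Tp]), zero_add]
  have hs0 : es n (xa 0) + es n (xa (n : ZMod (2*n))) ∈ W := by
    refine scale n _ (by exact_mod_cast NeZero.ne n) ?_
    have hsumP : ∑ p ∈ Tp n, (es n (xa p) + es n (xa (p + (n : ZMod (2*n))))
          - es n (xa 0) - es n (xa (n : ZMod (2*n))))
        = (∑ p ∈ Tp n, (es n (xa p) + es n (xa (p + (n : ZMod (2*n))))))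
          - ((n:ℝ) - 1) • (es n (xa 0) + es n (xa (n : ZMod (2*n)))) := by
      have : ∀ p ∈ Tp n, es n (xa p) + es n (xa (p + (n : ZMod (2*n))))
            - es n (xa 0) - es n (xa (n : ZMod (2*n)))
          = (es n (xa p) + es n (xa (p + (n : ZMod (2*n)))))
            - (es n (xa 0) + es n (xa (n : ZMod (2*n)))) := by
        intro p _; module
      rw [Finset.sum_congr rfl this, Finset.sum_sub_distrib, Finset.sum_const,
        card_Tp (n := n), ← Nat.cast_smul_eq_nsmul ℝ, Nat.cast_sub (by omega : 1 ≤ n)]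
      push_cast
      module
    have hmemP : (∑ p ∈ Tp n, (es n (xa p) + es n (xa (p + (n : ZMod (2*n))))))
        - ((n:ℝ) - 1) • (es n (xa 0) + es n (xa (n : ZMod (2*n)))) ∈ W := by
      rw [← hsumP]
      exact Submodule.sum_mem _ (fun p hp => hP p hp)
    have heq : (n:ℝ) • (es n (xa 0) + es n (xa (n : ZMod (2*n))))
        = vU n - ((∑ p ∈ Tp n, (es n (xa p) + es n (xa (p + (n : ZMod (2*n))))))
          - ((n:ℝ) - 1) • (es n (xa 0) + es n (xa (n : ZMod (2*n))))) := by
      rw [hvU_split]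
      module
    rw [heq]
    exact W.sub_mem hvU hmemP
  -- all pairs
  have hpairW : ∀ i, i ∈ Tm n →
      es n (xa i) + es n (xa (i + (n : ZMod (2*n)))) ∈ W := by
    intro i hi
    by_cases hi0 : i = 0
    · subst hi0
      rw [zero_add]
      exact hs0
    · have hip : i ∈ Tp n := by
        rw [Tm_eq, Finset.mem_insert] at hi
        tauto
      have heq : es n (xa i) + es n (xa (i + (n : ZMod (2*n))))
          = (es n (xa i) + es n (xa (i + (n : ZMod (2*n))))
              - es n (xa 0) - es n (xa (n : ZMod (2*n))))
            + (es n (xa 0) + es n (xa (n : ZMod (2*n)))) := by module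
      rw [heq]
      exact W.add_mem (hP i hip) hs0
  -- individual xa vectors
  have hexa : ∀ i, i ∈ Tm n →
      es n (xa i) ∈ W ∧ es n (xa (i + (n : ZMod (2*n)))) ∈ W := by
    intro i hi
    constructor
    · refine scale 2 _ (by norm_num) ?_
      have heq : (2:ℝ) • es n (xa i)
          = (es n (xa i) + es n (xa (i + (n : ZMod (2*n)))))
            + (es n (xa i) - es n (xa (i + (n : ZMod (2*n))))) := by module
      rw [heq]
      exact W.add_mem (hpairW i hi) (hM i hi)
    · refine scale 2 _ (by norm_num) ?_
      have heq : (2:ℝ) • es n (xa (i + (n : ZMod (2*n))))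
          = (es n (xa i) + es n (xa (i + (n : ZMod (2*n)))))
            - (es n (xa i) - es n (xa (i + (n : ZMod (2*n))))) := by module
      rw [heq]
      exact W.sub_mem (hpairW i hi) (hM i hi)
  have hexall : ∀ k : ZMod (2*n), es n (xa k) ∈ W := by
    intro k
    by_cases hk : k.val < n
    · exact (hexa k (mem_Tm.mpr hk)).1
    · have hi : k + (n : ZMod (2*n)) ∈ Tm n := by
        rw [mem_Tm]
        have hv : (k + (n : ZMod (2*n))).val = (k.val + n) % (2*n) := by
          rw [ZMod.val_add, val_N]
        have hkl : k.val < 2*n := k.val_lt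
        rw [hv, Nat.mod_eq_sub_mod (by omega), Nat.mod_eq_of_lt (by omega)]
        omega
      have hk' : k = (k + (n : ZMod (2*n))) + (n : ZMod (2*n)) := by
        linear_combination -hNN'
      rw [hk']
      exact (hexa _ hi).2
  -- finish
  rw [← (Pi.basisFun ℝ (QuaternionGroup n)).span_eq]
  refine Submodule.span_le.mpr ?_
  rintro _ ⟨g, rfl⟩
  have hb : Pi.basisFun ℝ (QuaternionGroup n) g = es n g := by
    funext u
    simp [es, Pi.basisFun_apply, Pi.single_apply]
  rw [hb]
  rcases g with k | k
  · exact hea k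
  · exact hexall k

end Span

section Assemble

variable {n : ℕ} [NeZero n]
set_option linter.unusedSectionVars false
set_option maxHeartbeats 2000000

lemma key_toMatrix (hn : 3 ≤ n) (bb : Module.Basis (Ix n) ℝ (QuaternionGroup n → ℝ))
    (hcoe : ⇑bb = bv n) :
    LinearMap.toMatrix bb bb
        (Matrix.toLin' (distMatrix (enhancedPowerGraph (QuaternionGroup n))))
      = Matrix.fromBlocks (Matrix.diagonal (dE n)) 0 0 (B3 n) := by
  have hNZ := hN0 (n := n)
  ext i j
  rw [LinearMap.toMatrix_apply, Matrix.toLin'_apply, hcoe]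
  rcases j with jE | t
  · have hfj : (distMatrix (enhancedPowerGraph (QuaternionGroup n))).mulVec
        (bv n (Sum.inl jE)) = dE n jE • bv n (Sum.inl jE) := by
      rcases jE with (⟨jj, hj⟩ | (u | ⟨ii, hi⟩)) | ⟨pp, hp⟩
      · obtain ⟨hj0, hj1, hjN⟩ : ¬(jj = 0) ∧ ¬(jj = 1) ∧ ¬(jj = (n : ZMod (2*n))) := by
          have := mem_Ta.mp hj
          tauto
        simpa [bv, dE] using L_A hn hj0 hjN
      · simpa [bv, dE] using L_W hn
      · simpa [bv, dE] using L_M hn ii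
      · have hp0 : pp ≠ 0 := (mem_Tp.mp hp).1
        have hpN : pp ≠ (n : ZMod (2*n)) := Tp_ne_N hn hp
        simpa [bv, dE] using L_P hn hp0 hpN
    rw [hfj, ← hcoe, map_smul, Module.Basis.repr_self]
    rcases i with iE | s
    · by_cases h : iE = jE
      · subst h
        simp [Matrix.fromBlocks, Finsupp.single_apply]
      · simp [Matrix.fromBlocks, Finsupp.single_apply, Matrix.diagonal_apply_ne _ h,
          Ne.symm h, h]
    · simp [Matrix.fromBlocks, Finsupp.single_apply]
  · fin_cases t
    · simp only [Fin.zero_eta, Fin.isValue]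
      have hfj : (distMatrix (enhancedPowerGraph (QuaternionGroup n))).mulVec
            (bv n (Sum.inr 0)) = bv n (Sum.inr 0) + (2:ℝ) • bv n (Sum.inr 1)
              + (2:ℝ) • bv n (Sum.inr 2) := by
          simpa [bv] using L_S hn
      rw [hfj, ← hcoe, map_add, map_add, map_smul, map_smul, Module.Basis.repr_self,
        Module.Basis.repr_self, Module.Basis.repr_self]
      rcases i with iE | s
      · simp [Matrix.fromBlocks, Finsupp.single_apply]
      · fin_cases s <;> simp [Matrix.fromBlocks, B3, Finsupp.single_apply, Matrix.vecHead, Matrix.vecTail]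
    · simp only [Fin.mk_one, Fin.isValue]
      have hfj : (distMatrix (enhancedPowerGraph (QuaternionGroup n))).mulVec
            (bv n (Sum.inr 1)) = (2*(n:ℝ)-2) • bv n (Sum.inr 0)
              + (2*(n:ℝ)-3) • bv n (Sum.inr 1) + (4*(n:ℝ)-4) • bv n (Sum.inr 2) := by
          simpa [bv] using L_T hn
      rw [hfj, ← hcoe, map_add, map_add, map_smul, map_smul, map_smul, Module.Basis.repr_self,
        Module.Basis.repr_self, Module.Basis.repr_self]
      rcases i with iE | s
      · simp [Matrix.fromBlocks, Finsupp.single_apply]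
      · fin_cases s <;> simp [Matrix.fromBlocks, B3, Finsupp.single_apply, Matrix.vecHead, Matrix.vecTail]
    · simp only [Fin.isValue, show (⟨2, by omega⟩ : Fin 3) = 2 from rfl]
      have hfj : (distMatrix (enhancedPowerGraph (QuaternionGroup n))).mulVec
            (bv n (Sum.inr 2)) = (2*(n:ℝ)) • bv n (Sum.inr 0)
              + (4*(n:ℝ)) • bv n (Sum.inr 1) + (4*(n:ℝ)-3) • bv n (Sum.inr 2) := by
          simpa [bv] using L_U hn
      rw [hfj, ← hcoe, map_add, map_add, map_smul, map_smul, map_smul, Module.Basis.repr_self,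
        Module.Basis.repr_self, Module.Basis.repr_self]
      rcases i with iE | s
      · simp [Matrix.fromBlocks, Finsupp.single_apply]
      · fin_cases s <;> simp [Matrix.fromBlocks, B3, Finsupp.single_apply, Matrix.vecHead, Matrix.vecTail]

open Polynomial in
lemma charpoly_diagonal_real {m : Type*} [Fintype m] [DecidableEq m] (d : m → ℝ) :
    (Matrix.diagonal d).charpoly = ∏ i, (X - C (d i)) := by
  have h : Matrix.charmatrix (Matrix.diagonal d)
      = Matrix.diagonal (fun i => (X : ℝ[X]) - C (d i)) := by
    ext i j
    by_cases h : i = j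
    · subst h
      rw [Matrix.charmatrix_apply_eq, Matrix.diagonal_apply_eq, Matrix.diagonal_apply_eq]
    · rw [Matrix.charmatrix_apply_ne _ _ _ h, Matrix.diagonal_apply_ne _ h,
        Matrix.diagonal_apply_ne _ h, map_zero, neg_zero]
  rw [Matrix.charpoly, h, Matrix.det_diagonal]

open Polynomial in
lemma charpoly_dE (hn : 3 ≤ n) :
    (Matrix.diagonal (dE n)).charpoly
      = (X + C 1) ^ (3*n-2) * (X + C 3) ^ (n-1) := by
  rw [charpoly_diagonal_real, Fintype.prod_sum_type]
  have h1 : ∀ i : IxA n ⊕ (Unit ⊕ IxM n), (X : ℝ[X]) - C (dE n (Sum.inl i)) = X + C 1 := by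
    intro i
    simp [dE]
  have h2 : ∀ p : IxP n, (X : ℝ[X]) - C (dE n (Sum.inr p)) = X + C 3 := by
    intro p
    simp [dE]
  rw [Finset.prod_congr rfl (fun i _ => h1 i), Finset.prod_congr rfl (fun p _ => h2 p),
    Finset.prod_const, Finset.prod_const, Finset.card_univ, Finset.card_univ]
  congr 1
  · congr 1
    simp only [Fintype.card_sum, Fintype.card_coe, Fintype.card_unit]
    rw [card_Ta (n := n) hn, card_Tm]
    omega
  · congr 1
    simp only [Fintype.card_coe]
    rw [card_Tp]

open Polynomial in
lemma charpoly_B3 :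
    (B3 n).charpoly = X ^ 3 - C (6 * (n : ℝ) - 5) * X ^ 2
      - C (8 * (n : ℝ) ^ 2 + 4 * (n:ℝ) - 7) * X - C (6 * (n : ℝ) - 3) := by
  rw [Matrix.charpoly, Matrix.det_fin_three]
  simp [Matrix.charmatrix_apply, B3, Matrix.diagonal_apply, Matrix.vecHead, Matrix.vecTail]
  simp only [map_sub, map_add, map_mul, map_one, map_ofNat, map_pow]
  ring

end Assemble

end EPG8

theorem stmt8' (n : ℕ) [NeZero n] (hn : 3 ≤ n) :
    (distMatrix (enhancedPowerGraph (QuaternionGroup n))).charpoly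
      = (X + C 1) ^ (3 * n - 2) * (X + C 3) ^ (n - 1) *
        (X ^ 3 - C (6 * (n : ℝ) - 5) * X ^ 2
          - C (8 * (n : ℝ) ^ 2 + 4 * n - 7) * X
          - C (6 * (n : ℝ) - 3)) ∧
    (distMatrix (enhancedPowerGraph (QuaternionGroup n))).det ≠ 0 := by
  classical
  have hcard : Fintype.card (EPG8.Ix n) = Module.finrank ℝ (QuaternionGroup n → ℝ) := by
    rw [EPG8.card_Ix (n := n) hn, Module.finrank_pi, QuaternionGroup.card]
  let bb : Module.Basis (EPG8.Ix n) ℝ (QuaternionGroup n → ℝ) :=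
    basisOfTopLeSpanOfCardEqFinrank (EPG8.bv n) (EPG8.span_bv (n := n) hn) hcard
  have hcoe : ⇑bb = EPG8.bv n := coe_basisOfTopLeSpanOfCardEqFinrank _ _ _
  have key := EPG8.key_toMatrix (n := n) hn bb hcoe
  have hD : (distMatrix (enhancedPowerGraph (QuaternionGroup n))).charpoly
      = (Matrix.fromBlocks (Matrix.diagonal (EPG8.dE n)) 0 0 (EPG8.B3 n)).charpoly := by
    rw [← key, LinearMap.charpoly_toMatrix]
    conv_lhs => rw [← LinearMap.toMatrix'_toLin'
      (distMatrix (enhancedPowerGraph (QuaternionGroup n)))]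
    rw [← LinearMap.toMatrix_eq_toMatrix', LinearMap.charpoly_toMatrix]
  have hblocks : (Matrix.fromBlocks (Matrix.diagonal (EPG8.dE n)) 0 0 (EPG8.B3 n)).charpoly
      = (X + C 1) ^ (3 * n - 2) * (X + C 3) ^ (n - 1) *
        (X ^ 3 - C (6 * (n : ℝ) - 5) * X ^ 2
          - C (8 * (n : ℝ) ^ 2 + 4 * n - 7) * X
          - C (6 * (n : ℝ) - 3)) := by
    rw [Matrix.charpoly_fromBlocks_zero₁₂, EPG8.charpoly_dE (n := n) hn,
      EPG8.charpoly_B3 (n := n)]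
  have hchar := hD.trans hblocks
  refine ⟨hchar, ?_⟩
  rw [Matrix.det_eq_sign_charpoly_coeff, Polynomial.coeff_zero_eq_eval_zero, hchar,
    QuaternionGroup.card]
  have h1 : ((-1 : ℝ)) ^ (4 * n) = 1 := by
    rw [pow_mul]
    norm_num
  rw [h1, one_mul]
  simp only [eval_mul, eval_pow, eval_add, eval_sub, eval_X, eval_C, eval_ofNat]
  have h3 : (3 : ℝ) ≤ (n : ℝ) := by exact_mod_cast hn
  have h2 : (0:ℝ) + 1 = 1 := by norm_num
  intro hcontra
  rcases mul_eq_zero.mp hcontra with hc | hc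
  · rcases mul_eq_zero.mp hc with hc2 | hc2
    · exact absurd hc2 (pow_ne_zero _ (by norm_num))
    · exact absurd hc2 (pow_ne_zero _ (by norm_num))
  · nlinarith [hc]

theorem stmt8 (n : ℕ) [NeZero n] (hn : 3 ≤ n) :
    (distMatrix (enhancedPowerGraph (QuaternionGroup n))).charpoly
      = (X + C 1) ^ (3 * n - 2) * (X + C 3) ^ (n - 1) *
        (X ^ 3 - C (6 * (n : ℝ) - 5) * X ^ 2
          - C (8 * (n : ℝ) ^ 2 + 4 * n - 7) * X
          - C (6 * (n : ℝ) - 3)) ∧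
    (distMatrix (enhancedPowerGraph (QuaternionGroup n))).det ≠ 0 :=
  stmt8' n hn
end

section
/- Let p, q be distinct primes, n, m ≥ 1, and G = El(p^n) × El(q^m) with identity (e, e). Define V₁ = {(e,e)}, V₂ = {(a, e) : a ≠ e}, V₃ = {(a, b) : a ≠ e, b ≠ e}, V₄ = {(e, b) : b ≠ e}. Then {V₁, V₂, V₃, V₄} is an equitable partition of the power graph of G; in particular, every vertex u ∈ V₃ satisfies |N(u) ∩ V₂| = p − 1, |N(u) ∩ V₃| = (p−1)(q−1) − 1, and |N(u) ∩ V₄| = q − 1. -/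
open Polynomial

/-- The four parts `V₁, V₂, V₃, V₄` of the partition of `El(pⁿ) × El(qᵐ)`. -/
def partV (p q n m : ℕ) : Fin 4 → Set (El p n × El q m)
  | 0 => {u | u.1 = 1 ∧ u.2 = 1}
  | 1 => {u | u.1 ≠ 1 ∧ u.2 = 1}
  | 2 => {u | u.1 ≠ 1 ∧ u.2 ≠ 1}
  | 3 => {u | u.1 = 1 ∧ u.2 ≠ 1}

/-! ### Auxiliary lemmas -/

open Subgroup

set_option linter.unusedSectionVars false

lemma pg_adj {G : Type*} [Group G] (u w : G) :
    (powerGraph G).Adj u w ↔ u ≠ w ∧ (u ∈ zpowers w ∨ w ∈ zpowers u) := Iff.rfl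

lemma pg_ne_of_fst {A B : Type*} {x a : A} {y b : B} (h : x ≠ a) : (x, y) ≠ (a, b) :=
  fun he => h (congrArg Prod.fst he)

lemma pg_ne_of_snd {A B : Type*} {x a : A} {y b : B} (h : y ≠ b) : (x, y) ≠ (a, b) :=
  fun he => h (congrArg Prod.snd he)

lemma pg_mem_zpowers_one_iff {A : Type*} [Group A] (x : A) :
    x ∈ zpowers (1 : A) ↔ x = 1 := by
  rw [Subgroup.zpowers_one_eq_bot, Subgroup.mem_bot]

lemma El.pow_eq_one {p n : ℕ} (x : El p n) : x ^ p = 1 := by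
  have h : p • x.toAdd = 0 := by
    funext i
    simp [nsmul_eq_mul, ZMod.natCast_self]
  rw [← ofAdd_toAdd x, ← ofAdd_nsmul, h, ofAdd_zero]

section Generic

variable {A B : Type*} [Group A] [Group B] {p q : ℕ}

lemma pg_zpow_p_mul (hA : ∀ x : A, x ^ p = 1) (x : A) (k : ℤ) : x ^ ((p : ℤ) * k) = 1 := by
  rw [zpow_mul, zpow_natCast, hA, one_zpow]

lemma pg_mem_zpowers_symm (hp : p.Prime) (hA : ∀ x : A, x ^ p = 1)
    {a c : A} (ha : a ≠ 1) (h : a ∈ zpowers c) : c ∈ zpowers a := by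
  haveI : Fact p.Prime := ⟨hp⟩
  have hc : c ≠ 1 := by rintro rfl; simp [Subgroup.zpowers_one_eq_bot] at h; exact ha h
  have hoc : orderOf c = p := orderOf_eq_prime (hA c) hc
  have hoa : orderOf a = p := orderOf_eq_prime (hA a) ha
  have hfin : IsOfFinOrder c := by rw [← orderOf_pos_iff, hoc]; exact hp.pos
  haveI : Finite (zpowers c) := hfin.finite_zpowers.to_subtype
  have heq : zpowers a = zpowers c := Subgroup.eq_of_le_of_card_ge (zpowers_le.mpr h)
    (by rw [Nat.card_zpowers, Nat.card_zpowers, hoa, hoc])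
  rw [heq]; exact mem_zpowers c

lemma pg_crt_pow (hco : IsCoprime (p : ℤ) (q : ℤ)) (hA : ∀ x : A, x ^ p = 1)
    (hB : ∀ y : B, y ^ q = 1) (a : A) (b : B) (i j : ℤ) :
    ∃ k : ℤ, a ^ k = a ^ i ∧ b ^ k = b ^ j := by
  obtain ⟨s, t, hst⟩ := hco
  refine ⟨i * (t * q) + j * (s * p), ?_, ?_⟩
  · have h1 : i * (t * q) + j * (s * p) = i + (p : ℤ) * (j * s - i * s) := by
      linear_combination i * hst
    rw [h1, zpow_add, pg_zpow_p_mul hA, mul_one]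
  · have h1 : i * (t * q) + j * (s * p) = j + (q : ℤ) * (i * t - j * t) := by
      linear_combination j * hst
    rw [h1, zpow_add, pg_zpow_p_mul hB, mul_one]

lemma pg_zpowers_prod_eq (hco : IsCoprime (p : ℤ) (q : ℤ)) (hA : ∀ x : A, x ^ p = 1)
    (hB : ∀ y : B, y ^ q = 1) (a : A) (b : B) :
    ((zpowers (a, b) : Subgroup (A × B)) : Set (A × B))
      = (zpowers a : Set A) ×ˢ (zpowers b : Set B) := by
  ext ⟨x, y⟩
  simp only [SetLike.mem_coe, Subgroup.mem_zpowers_iff, Set.mem_prod, Prod.mk.injEq]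
  constructor
  · rintro ⟨k, hk⟩
    have hk1 : a ^ k = x := congrArg Prod.fst hk
    have hk2 : b ^ k = y := congrArg Prod.snd hk
    exact ⟨⟨k, hk1⟩, ⟨k, hk2⟩⟩
  · rintro ⟨⟨i, hi⟩, ⟨j, hj⟩⟩
    obtain ⟨k, hk1, hk2⟩ := pg_crt_pow hco hA hB a b i j
    exact ⟨k, show ((a, b) : A × B) ^ k = (x, y) by
      rw [show ((a, b) : A × B) ^ k = (a ^ k, b ^ k) from rfl, hk1, hk2, hi, hj]⟩

lemma pg_mem_zpowers_pair_iff (hco : IsCoprime (p : ℤ) (q : ℤ)) (hA : ∀ x : A, x ^ p = 1)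
    (hB : ∀ y : B, y ^ q = 1) (a x : A) (b y : B) :
    (x, y) ∈ zpowers (a, b) ↔ x ∈ zpowers a ∧ y ∈ zpowers b := by
  have h := pg_zpowers_prod_eq hco hA hB a b
  constructor
  · intro hm
    have h2 : (x, y) ∈ (zpowers a : Set A) ×ˢ (zpowers b : Set B) := h ▸ hm
    exact h2
  · intro hm
    have h2 : (x, y) ∈ (zpowers a : Set A) ×ˢ (zpowers b : Set B) := hm
    rw [← h] at h2; exact h2

variable (hp : p.Prime) (hq : q.Prime) (hco : IsCoprime (p : ℤ) (q : ℤ))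
    (hA : ∀ x : A, x ^ p = 1) (hB : ∀ y : B, y ^ q = 1)
include hp hq hco hA hB

/-- Neighborhood of a `V₃`-type vertex. -/
lemma pg_nbhdV3 {a : A} {b : B} (ha : a ≠ 1) (hb : b ≠ 1) :
    {w : A × B | (powerGraph (A × B)).Adj (a, b) w}
      = ((zpowers a : Set A) ×ˢ (zpowers b : Set B)) \ {(a, b)} := by
  ext ⟨x, y⟩
  simp only [Set.mem_setOf_eq, pg_adj, Set.mem_diff, Set.mem_prod,
    Set.mem_singleton_iff, Prod.mk.injEq, ne_eq, Prod.ext_iff,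
    pg_mem_zpowers_pair_iff hco hA hB]
  constructor
  · rintro ⟨hne, h | h⟩
    · exact ⟨⟨pg_mem_zpowers_symm hp hA ha h.1, pg_mem_zpowers_symm hq hB hb h.2⟩,
        fun he => hne ⟨he.1.symm, he.2.symm⟩⟩
    · exact ⟨h, fun he => hne ⟨he.1.symm, he.2.symm⟩⟩
  · rintro ⟨⟨hx, hy⟩, hne⟩
    exact ⟨fun he => hne ⟨he.1.symm, he.2.symm⟩, Or.inr ⟨hx, hy⟩⟩

/-! Sets of neighbours of a `V₂`-type vertex `(a, 1)` inside the four parts. -/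

lemma pg_setV2V1 {a : A} (ha : a ≠ 1) :
    {w : A × B | (powerGraph (A × B)).Adj (a, 1) w ∧ (w.1 = 1 ∧ w.2 = 1)}
      = {((1 : A), (1 : B))} := by
  ext ⟨x, y⟩
  constructor
  · rintro ⟨-, hx, hy⟩
    simp only [Set.mem_singleton_iff, Prod.mk.injEq]
    exact ⟨hx, hy⟩
  · intro h
    rw [Set.mem_singleton_iff, Prod.mk.injEq] at h
    obtain ⟨rfl, rfl⟩ := h
    exact ⟨⟨pg_ne_of_fst ha, Or.inr (one_mem _)⟩, rfl, rfl⟩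

lemma pg_setV2V2 {a : A} (ha : a ≠ 1) :
    {w : A × B | (powerGraph (A × B)).Adj (a, 1) w ∧ (w.1 ≠ 1 ∧ w.2 = 1)}
      = ((zpowers a : Set A) \ {1, a}) ×ˢ ({1} : Set B) := by
  ext ⟨x, y⟩
  simp only [Set.mem_setOf_eq, Set.mem_prod, Set.mem_diff, Set.mem_insert_iff,
    Set.mem_singleton_iff, SetLike.mem_coe]
  constructor
  · rintro ⟨⟨hne, h | h⟩, hx1, hy1⟩
    · rw [pg_mem_zpowers_pair_iff hco hA hB] at h
      have hxa : x ≠ a := fun he => hne (by rw [he, hy1])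
      exact ⟨⟨pg_mem_zpowers_symm hp hA ha h.1, fun hor => hor.elim hx1 hxa⟩, hy1⟩
    · rw [pg_mem_zpowers_pair_iff hco hA hB] at h
      have hxa : x ≠ a := fun he => hne (by rw [he, hy1])
      exact ⟨⟨h.1, fun hor => hor.elim hx1 hxa⟩, hy1⟩
  · rintro ⟨⟨hx, hx1⟩, rfl⟩
    push_neg at hx1
    refine ⟨⟨pg_ne_of_fst hx1.2.symm, Or.inr ?_⟩, hx1.1, rfl⟩
    exact (pg_mem_zpowers_pair_iff hco hA hB a x 1 1).mpr ⟨hx, one_mem _⟩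

lemma pg_setV2V3 {a : A} (ha : a ≠ 1) :
    {w : A × B | (powerGraph (A × B)).Adj (a, 1) w ∧ (w.1 ≠ 1 ∧ w.2 ≠ 1)}
      = ((zpowers a : Set A) \ {1}) ×ˢ {y : B | y ≠ 1} := by
  ext ⟨x, y⟩
  simp only [Set.mem_setOf_eq, Set.mem_prod, Set.mem_diff, Set.mem_singleton_iff,
    SetLike.mem_coe]
  constructor
  · rintro ⟨⟨hne, h | h⟩, hx1, hy1⟩
    · rw [pg_mem_zpowers_pair_iff hco hA hB] at h
      exact ⟨⟨pg_mem_zpowers_symm hp hA ha h.1, hx1⟩, hy1⟩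
    · rw [pg_mem_zpowers_pair_iff hco hA hB] at h
      exact absurd ((pg_mem_zpowers_one_iff y).mp h.2) hy1
  · rintro ⟨⟨hx, hx1⟩, hy1⟩
    have hax : a ∈ zpowers x := pg_mem_zpowers_symm hp hA hx1 hx
    obtain ⟨i, hi⟩ := Subgroup.mem_zpowers_iff.mp hax
    obtain ⟨k, hk1, hk2⟩ := pg_crt_pow hco hA hB x y i 0
    refine ⟨⟨pg_ne_of_snd (fun h => hy1 h.symm), Or.inl ?_⟩, hx1, hy1⟩
    exact Subgroup.mem_zpowers_iff.mpr ⟨k, show ((x, y) : A × B) ^ k = (a, 1) by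
      rw [show ((x, y) : A × B) ^ k = (x ^ k, y ^ k) from rfl, hk1, hk2, hi, zpow_zero]⟩

lemma pg_setV2V4 {a : A} (ha : a ≠ 1) :
    {w : A × B | (powerGraph (A × B)).Adj (a, 1) w ∧ (w.1 = 1 ∧ w.2 ≠ 1)}
      = (∅ : Set (A × B)) := by
  ext ⟨x, y⟩
  simp only [Set.mem_setOf_eq, Set.mem_empty_iff_false, iff_false, not_and]
  rintro ⟨hne, h | h⟩ rfl hy1
  · rw [pg_mem_zpowers_pair_iff hco hA hB] at h
    exact ha ((pg_mem_zpowers_one_iff a).mp h.1)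
  · rw [pg_mem_zpowers_pair_iff hco hA hB] at h
    exact hy1 ((pg_mem_zpowers_one_iff y).mp h.2)

/-! Sets of neighbours of a `V₄`-type vertex `(1, b)` inside the four parts. -/

lemma pg_setV4V1 {b : B} (hb : b ≠ 1) :
    {w : A × B | (powerGraph (A × B)).Adj (1, b) w ∧ (w.1 = 1 ∧ w.2 = 1)}
      = {((1 : A), (1 : B))} := by
  ext ⟨x, y⟩
  constructor
  · rintro ⟨-, hx, hy⟩
    simp only [Set.mem_singleton_iff, Prod.mk.injEq]
    exact ⟨hx, hy⟩
  · intro h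
    rw [Set.mem_singleton_iff, Prod.mk.injEq] at h
    obtain ⟨rfl, rfl⟩ := h
    exact ⟨⟨pg_ne_of_snd hb, Or.inr (one_mem _)⟩, rfl, rfl⟩

lemma pg_setV4V2 {b : B} (hb : b ≠ 1) :
    {w : A × B | (powerGraph (A × B)).Adj (1, b) w ∧ (w.1 ≠ 1 ∧ w.2 = 1)}
      = (∅ : Set (A × B)) := by
  ext ⟨x, y⟩
  simp only [Set.mem_setOf_eq, Set.mem_empty_iff_false, iff_false, not_and]
  rintro ⟨hne, h | h⟩ hx1 rfl
  · rw [pg_mem_zpowers_pair_iff hco hA hB] at h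
    exact hb ((pg_mem_zpowers_one_iff b).mp h.2)
  · rw [pg_mem_zpowers_pair_iff hco hA hB] at h
    exact hx1 ((pg_mem_zpowers_one_iff x).mp h.1)

lemma pg_setV4V3 {b : B} (hb : b ≠ 1) :
    {w : A × B | (powerGraph (A × B)).Adj (1, b) w ∧ (w.1 ≠ 1 ∧ w.2 ≠ 1)}
      = {x : A | x ≠ 1} ×ˢ ((zpowers b : Set B) \ {1}) := by
  ext ⟨x, y⟩
  simp only [Set.mem_setOf_eq, Set.mem_prod, Set.mem_diff, Set.mem_singleton_iff,
    SetLike.mem_coe]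
  constructor
  · rintro ⟨⟨hne, h | h⟩, hx1, hy1⟩
    · rw [pg_mem_zpowers_pair_iff hco hA hB] at h
      exact ⟨hx1, pg_mem_zpowers_symm hq hB hb h.2, hy1⟩
    · rw [pg_mem_zpowers_pair_iff hco hA hB] at h
      exact absurd ((pg_mem_zpowers_one_iff x).mp h.1) hx1
  · rintro ⟨hx1, hy, hy1⟩
    have hby : b ∈ zpowers y := pg_mem_zpowers_symm hq hB hy1 hy
    obtain ⟨i, hi⟩ := Subgroup.mem_zpowers_iff.mp hby
    obtain ⟨k, hk1, hk2⟩ := pg_crt_pow hco hA hB x y 0 i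
    refine ⟨⟨pg_ne_of_fst (fun h => hx1 h.symm), Or.inl ?_⟩, hx1, hy1⟩
    exact Subgroup.mem_zpowers_iff.mpr ⟨k, show ((x, y) : A × B) ^ k = (1, b) by
      rw [show ((x, y) : A × B) ^ k = (x ^ k, y ^ k) from rfl, hk1, hk2, hi, zpow_zero]⟩

lemma pg_setV4V4 {b : B} (hb : b ≠ 1) :
    {w : A × B | (powerGraph (A × B)).Adj (1, b) w ∧ (w.1 = 1 ∧ w.2 ≠ 1)}
      = ({1} : Set A) ×ˢ ((zpowers b : Set B) \ {1, b}) := by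
  ext ⟨x, y⟩
  simp only [Set.mem_setOf_eq, Set.mem_prod, Set.mem_diff, Set.mem_insert_iff,
    Set.mem_singleton_iff, SetLike.mem_coe]
  constructor
  · rintro ⟨⟨hne, h | h⟩, hx1, hy1⟩
    · rw [pg_mem_zpowers_pair_iff hco hA hB] at h
      have hyb : y ≠ b := fun he => hne (by rw [hx1, he])
      exact ⟨hx1, pg_mem_zpowers_symm hq hB hb h.2, fun hor => hor.elim hy1 hyb⟩
    · rw [pg_mem_zpowers_pair_iff hco hA hB] at h
      have hyb : y ≠ b := fun he => hne (by rw [hx1, he])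
      exact ⟨hx1, h.2, fun hor => hor.elim hy1 hyb⟩
  · rintro ⟨rfl, hy, hy1⟩
    push_neg at hy1
    refine ⟨⟨pg_ne_of_snd hy1.2.symm, Or.inr ?_⟩, rfl, hy1.1⟩
    exact (pg_mem_zpowers_pair_iff hco hA hB 1 1 b y).mpr ⟨one_mem _, hy⟩

/-! Sets of neighbours of a `V₃`-type vertex `(a, b)` inside the four parts. -/

lemma pg_setV3V1 {a : A} {b : B} (ha : a ≠ 1) (hb : b ≠ 1) :
    {w : A × B | (powerGraph (A × B)).Adj (a, b) w ∧ (w.1 = 1 ∧ w.2 = 1)}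
      = {((1 : A), (1 : B))} := by
  ext ⟨x, y⟩
  constructor
  · rintro ⟨-, hx, hy⟩
    simp only [Set.mem_singleton_iff, Prod.mk.injEq]
    exact ⟨hx, hy⟩
  · intro h
    rw [Set.mem_singleton_iff, Prod.mk.injEq] at h
    obtain ⟨rfl, rfl⟩ := h
    exact ⟨⟨pg_ne_of_fst ha, Or.inr (one_mem _)⟩, rfl, rfl⟩

lemma pg_setV3V2 {a : A} {b : B} (ha : a ≠ 1) (hb : b ≠ 1) :
    {w : A × B | (powerGraph (A × B)).Adj (a, b) w ∧ (w.1 ≠ 1 ∧ w.2 = 1)}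
      = ((zpowers a : Set A) \ {1}) ×ˢ ({1} : Set B) := by
  have hN := pg_nbhdV3 hp hq hco hA hB ha hb
  ext ⟨x, y⟩
  simp only [Set.mem_setOf_eq, Set.mem_prod, Set.mem_diff, Set.mem_singleton_iff,
    SetLike.mem_coe]
  constructor
  · rintro ⟨hadj, hx1, hy1⟩
    have hm : (x, y) ∈ ((zpowers a : Set A) ×ˢ (zpowers b : Set B)) \ {(a, b)} := by
      rw [← hN]; exact hadj
    exact ⟨⟨hm.1.1, hx1⟩, hy1⟩
  · rintro ⟨⟨hx, hx1⟩, rfl⟩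
    refine ⟨?_, hx1, rfl⟩
    have hm : ((x, (1 : B))) ∈ ((zpowers a : Set A) ×ˢ (zpowers b : Set B)) \ {(a, b)} :=
      ⟨⟨hx, one_mem _⟩, pg_ne_of_snd (fun h => hb h.symm)⟩
    show (x, (1 : B)) ∈ {w : A × B | (powerGraph (A × B)).Adj (a, b) w}
    rw [hN]; exact hm

lemma pg_setV3V4 {a : A} {b : B} (ha : a ≠ 1) (hb : b ≠ 1) :
    {w : A × B | (powerGraph (A × B)).Adj (a, b) w ∧ (w.1 = 1 ∧ w.2 ≠ 1)}
      = ({1} : Set A) ×ˢ ((zpowers b : Set B) \ {1}) := by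
  have hN := pg_nbhdV3 hp hq hco hA hB ha hb
  ext ⟨x, y⟩
  simp only [Set.mem_setOf_eq, Set.mem_prod, Set.mem_diff, Set.mem_singleton_iff,
    SetLike.mem_coe]
  constructor
  · rintro ⟨hadj, hx1, hy1⟩
    have hm : (x, y) ∈ ((zpowers a : Set A) ×ˢ (zpowers b : Set B)) \ {(a, b)} := by
      rw [← hN]; exact hadj
    exact ⟨hx1, hm.1.2, hy1⟩
  · rintro ⟨rfl, hy, hy1⟩
    refine ⟨?_, rfl, hy1⟩
    have hm : (((1 : A), y)) ∈ ((zpowers a : Set A) ×ˢ (zpowers b : Set B)) \ {(a, b)} :=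
      ⟨⟨one_mem _, hy⟩, pg_ne_of_fst (fun h => ha h.symm)⟩
    show ((1 : A), y) ∈ {w : A × B | (powerGraph (A × B)).Adj (a, b) w}
    rw [hN]; exact hm

lemma pg_setV3V3 {a : A} {b : B} (ha : a ≠ 1) (hb : b ≠ 1) :
    {w : A × B | (powerGraph (A × B)).Adj (a, b) w ∧ (w.1 ≠ 1 ∧ w.2 ≠ 1)}
      = (((zpowers a : Set A) \ {1}) ×ˢ ((zpowers b : Set B) \ {1})) \ {(a, b)} := by
  have hN := pg_nbhdV3 hp hq hco hA hB ha hb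
  ext ⟨x, y⟩
  simp only [Set.mem_setOf_eq, Set.mem_prod, Set.mem_diff, Set.mem_singleton_iff,
    SetLike.mem_coe]
  constructor
  · rintro ⟨hadj, hx1, hy1⟩
    have hm : (x, y) ∈ ((zpowers a : Set A) ×ˢ (zpowers b : Set B)) \ {(a, b)} := by
      rw [← hN]; exact hadj
    exact ⟨⟨⟨hm.1.1, hx1⟩, hm.1.2, hy1⟩, hm.2⟩
  · rintro ⟨⟨⟨hx, hx1⟩, hy, hy1⟩, hne⟩
    refine ⟨?_, hx1, hy1⟩
    show (x, y) ∈ {w : A × B | (powerGraph (A × B)).Adj (a, b) w}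
    rw [hN]; exact ⟨⟨hx, hy⟩, hne⟩

end Generic

/-! ### Counting -/

lemma pg_ncard_prod {α β : Type*} [Finite α] [Finite β] (S : Set α) (T : Set β) :
    (S ×ˢ T).ncard = S.ncard * T.ncard := by
  rw [← Nat.card_coe_set_eq, ← Nat.card_coe_set_eq, ← Nat.card_coe_set_eq,
    Nat.card_congr (Equiv.Set.prod S T), Nat.card_prod]

section Count
variable {A : Type*} [Group A] [Finite A] {p : ℕ}

lemma pg_ncard_zpowers_set (hp : p.Prime) (hA : ∀ x : A, x ^ p = 1) {a : A} (ha : a ≠ 1) :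
    (zpowers a : Set A).ncard = p := by
  haveI : Fact p.Prime := ⟨hp⟩
  rw [← Nat.card_coe_set_eq]
  have h2 : Nat.card (zpowers a) = orderOf a := Nat.card_zpowers a
  rw [SetLike.coe_sort_coe, h2, orderOf_eq_prime (hA a) ha]

lemma pg_ncard_zpowers_diff_one (hp : p.Prime) (hA : ∀ x : A, x ^ p = 1)
    {a : A} (ha : a ≠ 1) :
    ((zpowers a : Set A) \ {1}).ncard = p - 1 := by
  rw [Set.ncard_diff_singleton_of_mem (one_mem (zpowers a)),
    pg_ncard_zpowers_set hp hA ha]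

lemma pg_ncard_zpowers_diff_pair (hp : p.Prime) (hA : ∀ x : A, x ^ p = 1)
    {a : A} (ha : a ≠ 1) :
    ((zpowers a : Set A) \ {1, a}).ncard = p - 2 := by
  have hsub : ({1, a} : Set A) ⊆ (zpowers a : Set A) := by
    rintro x (rfl | rfl)
    exacts [one_mem _, mem_zpowers _]
  rw [Set.ncard_diff hsub, Set.ncard_pair (Ne.symm ha), pg_ncard_zpowers_set hp hA ha]

end Count

/-! ### Specialization to `El p n × El q m` -/

section Main

variable {p q n m : ℕ}

lemma partV_zero (p q n m : ℕ) : partV p q n m 0 = {u | u.1 = 1 ∧ u.2 = 1} := rfl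
lemma partV_one (p q n m : ℕ) : partV p q n m 1 = {u | u.1 ≠ 1 ∧ u.2 = 1} := rfl
lemma partV_two (p q n m : ℕ) : partV p q n m 2 = {u | u.1 ≠ 1 ∧ u.2 ≠ 1} := rfl
lemma partV_three (p q n m : ℕ) : partV p q n m 3 = {u | u.1 = 1 ∧ u.2 ≠ 1} := rfl

lemma pg_hco (hp : p.Prime) (hq : q.Prime) (hpq : p ≠ q) : IsCoprime (p : ℤ) (q : ℤ) :=
  Nat.isCoprime_iff_coprime.mpr ((Nat.coprime_primes hp hq).mpr hpq)

lemma pg_countsV2 (hp : p.Prime) (hq : q.Prime) (hpq : p ≠ q) {a : El p n} (ha : a ≠ 1) :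
    Nat.card {w : El p n × El q m |
        (powerGraph (El p n × El q m)).Adj (a, 1) w ∧ w ∈ partV p q n m 0} = 1 ∧
    Nat.card {w : El p n × El q m |
        (powerGraph (El p n × El q m)).Adj (a, 1) w ∧ w ∈ partV p q n m 1} = p - 2 ∧
    Nat.card {w : El p n × El q m |
        (powerGraph (El p n × El q m)).Adj (a, 1) w ∧ w ∈ partV p q n m 2}
      = (p - 1) * {y : El q m | y ≠ 1}.ncard ∧
    Nat.card {w : El p n × El q m |
        (powerGraph (El p n × El q m)).Adj (a, 1) w ∧ w ∈ partV p q n m 3} = 0 := by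
  haveI : NeZero p := ⟨hp.ne_zero⟩
  haveI : NeZero q := ⟨hq.ne_zero⟩
  have hco := pg_hco hp hq hpq
  have hA : ∀ x : El p n, x ^ p = 1 := El.pow_eq_one
  have hB : ∀ y : El q m, y ^ q = 1 := El.pow_eq_one
  refine ⟨?_, ?_, ?_, ?_⟩
  · rw [Nat.card_coe_set_eq]
    simp only [partV_zero, Set.mem_setOf_eq]
    rw [pg_setV2V1 hp hq hco hA hB ha, Set.ncard_singleton]
  · rw [Nat.card_coe_set_eq]
    simp only [partV_one, Set.mem_setOf_eq]
    rw [pg_setV2V2 hp hq hco hA hB ha, pg_ncard_prod, Set.ncard_singleton, mul_one,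
      pg_ncard_zpowers_diff_pair hp hA ha]
  · rw [Nat.card_coe_set_eq]
    simp only [partV_two, Set.mem_setOf_eq]
    rw [pg_setV2V3 hp hq hco hA hB ha, pg_ncard_prod,
      pg_ncard_zpowers_diff_one hp hA ha]
  · rw [Nat.card_coe_set_eq]
    simp only [partV_three, Set.mem_setOf_eq]
    rw [pg_setV2V4 hp hq hco hA hB ha, Set.ncard_empty]

lemma pg_countsV4 (hp : p.Prime) (hq : q.Prime) (hpq : p ≠ q) {b : El q m} (hb : b ≠ 1) :
    Nat.card {w : El p n × El q m |
        (powerGraph (El p n × El q m)).Adj (1, b) w ∧ w ∈ partV p q n m 0} = 1 ∧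
    Nat.card {w : El p n × El q m |
        (powerGraph (El p n × El q m)).Adj (1, b) w ∧ w ∈ partV p q n m 1} = 0 ∧
    Nat.card {w : El p n × El q m |
        (powerGraph (El p n × El q m)).Adj (1, b) w ∧ w ∈ partV p q n m 2}
      = {x : El p n | x ≠ 1}.ncard * (q - 1) ∧
    Nat.card {w : El p n × El q m |
        (powerGraph (El p n × El q m)).Adj (1, b) w ∧ w ∈ partV p q n m 3} = q - 2 := by
  haveI : NeZero p := ⟨hp.ne_zero⟩
  haveI : NeZero q := ⟨hq.ne_zero⟩
  have hco := pg_hco hp hq hpq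
  have hA : ∀ x : El p n, x ^ p = 1 := El.pow_eq_one
  have hB : ∀ y : El q m, y ^ q = 1 := El.pow_eq_one
  refine ⟨?_, ?_, ?_, ?_⟩
  · rw [Nat.card_coe_set_eq]
    simp only [partV_zero, Set.mem_setOf_eq]
    rw [pg_setV4V1 hp hq hco hA hB hb, Set.ncard_singleton]
  · rw [Nat.card_coe_set_eq]
    simp only [partV_one, Set.mem_setOf_eq]
    rw [pg_setV4V2 hp hq hco hA hB hb, Set.ncard_empty]
  · rw [Nat.card_coe_set_eq]
    simp only [partV_two, Set.mem_setOf_eq]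
    rw [pg_setV4V3 hp hq hco hA hB hb, pg_ncard_prod,
      pg_ncard_zpowers_diff_one hq hB hb]
  · rw [Nat.card_coe_set_eq]
    simp only [partV_three, Set.mem_setOf_eq]
    rw [pg_setV4V4 hp hq hco hA hB hb, pg_ncard_prod, Set.ncard_singleton, one_mul,
      pg_ncard_zpowers_diff_pair hq hB hb]

lemma pg_countsV3 (hp : p.Prime) (hq : q.Prime) (hpq : p ≠ q) {a : El p n} {b : El q m} (ha : a ≠ 1) (hb : b ≠ 1) :
    Nat.card {w : El p n × El q m |
        (powerGraph (El p n × El q m)).Adj (a, b) w ∧ w ∈ partV p q n m 0} = 1 ∧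
    Nat.card {w : El p n × El q m |
        (powerGraph (El p n × El q m)).Adj (a, b) w ∧ w ∈ partV p q n m 1} = p - 1 ∧
    Nat.card {w : El p n × El q m |
        (powerGraph (El p n × El q m)).Adj (a, b) w ∧ w ∈ partV p q n m 2}
      = (p - 1) * (q - 1) - 1 ∧
    Nat.card {w : El p n × El q m |
        (powerGraph (El p n × El q m)).Adj (a, b) w ∧ w ∈ partV p q n m 3} = q - 1 := by
  haveI : NeZero p := ⟨hp.ne_zero⟩
  haveI : NeZero q := ⟨hq.ne_zero⟩
  have hco := pg_hco hp hq hpq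
  have hA : ∀ x : El p n, x ^ p = 1 := El.pow_eq_one
  have hB : ∀ y : El q m, y ^ q = 1 := El.pow_eq_one
  refine ⟨?_, ?_, ?_, ?_⟩
  · rw [Nat.card_coe_set_eq]
    simp only [partV_zero, Set.mem_setOf_eq]
    rw [pg_setV3V1 hp hq hco hA hB ha hb, Set.ncard_singleton]
  · rw [Nat.card_coe_set_eq]
    simp only [partV_one, Set.mem_setOf_eq]
    rw [pg_setV3V2 hp hq hco hA hB ha hb, pg_ncard_prod, Set.ncard_singleton, mul_one,
      pg_ncard_zpowers_diff_one hp hA ha]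
  · rw [Nat.card_coe_set_eq]
    simp only [partV_two, Set.mem_setOf_eq]
    have hmem : ((a, b) : El p n × El q m) ∈
        ((zpowers a : Set (El p n)) \ {1}) ×ˢ ((zpowers b : Set (El q m)) \ {1}) :=
      ⟨⟨mem_zpowers a, ha⟩, ⟨mem_zpowers b, hb⟩⟩
    rw [pg_setV3V3 hp hq hco hA hB ha hb, Set.ncard_diff_singleton_of_mem hmem,
      pg_ncard_prod, pg_ncard_zpowers_diff_one hp hA ha,
      pg_ncard_zpowers_diff_one hq hB hb]
  · rw [Nat.card_coe_set_eq]
    simp only [partV_three, Set.mem_setOf_eq]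
    rw [pg_setV3V4 hp hq hco hA hB ha hb, pg_ncard_prod, Set.ncard_singleton, one_mul,
      pg_ncard_zpowers_diff_one hq hB hb]

end Main

theorem stmt10 (p q n m : ℕ) (hp : p.Prime) (hq : q.Prime) (hpq : p ≠ q)
    (hn : 1 ≤ n) (hm : 1 ≤ m) :
    (∀ (i j : Fin 4), ∀ u v : El p n × El q m,
        u ∈ partV p q n m i → v ∈ partV p q n m i →
        Nat.card {w | (powerGraph (El p n × El q m)).Adj u w ∧ w ∈ partV p q n m j}
          = Nat.card {w | (powerGraph (El p n × El q m)).Adj v w ∧ w ∈ partV p q n m j}) ∧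
    (∀ u : El p n × El q m, u ∈ partV p q n m 2 →
      Nat.card {w | (powerGraph (El p n × El q m)).Adj u w ∧ w ∈ partV p q n m 1} = p - 1 ∧
      Nat.card {w | (powerGraph (El p n × El q m)).Adj u w ∧ w ∈ partV p q n m 2}
        = (p - 1) * (q - 1) - 1 ∧
      Nat.card {w | (powerGraph (El p n × El q m)).Adj u w ∧ w ∈ partV p q n m 3} = q - 1) := by
  constructor
  · intro i j u v hu hv
    fin_cases i
    · obtain ⟨hu1, hu2⟩ := hu
      obtain ⟨hv1, hv2⟩ := hv
      have huv : u = v := Prod.ext (hu1.trans hv1.symm) (hu2.trans hv2.symm)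
      rw [huv]
    · obtain ⟨a, b⟩ := u
      obtain ⟨c, d⟩ := v
      obtain ⟨ha, hb⟩ := hu
      obtain ⟨hc, hd⟩ := hv
      have hb' : b = 1 := hb
      have hd' : d = 1 := hd
      subst hb' hd'
      obtain ⟨h0u, h1u, h2u, h3u⟩ := pg_countsV2 (q := q) (m := m) hp hq hpq ha
      obtain ⟨h0v, h1v, h2v, h3v⟩ := pg_countsV2 (q := q) (m := m) hp hq hpq hc
      fin_cases j
      · exact h0u.trans h0v.symm
      · exact h1u.trans h1v.symm
      · exact h2u.trans h2v.symm
      · exact h3u.trans h3v.symm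
    · obtain ⟨a, b⟩ := u
      obtain ⟨c, d⟩ := v
      obtain ⟨ha, hb⟩ := hu
      obtain ⟨hc, hd⟩ := hv
      obtain ⟨h0u, h1u, h2u, h3u⟩ := pg_countsV3 hp hq hpq ha hb
      obtain ⟨h0v, h1v, h2v, h3v⟩ := pg_countsV3 hp hq hpq hc hd
      fin_cases j
      · exact h0u.trans h0v.symm
      · exact h1u.trans h1v.symm
      · exact h2u.trans h2v.symm
      · exact h3u.trans h3v.symm
    · obtain ⟨a, b⟩ := u
      obtain ⟨c, d⟩ := v
      obtain ⟨ha, hb⟩ := hu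
      obtain ⟨hc, hd⟩ := hv
      have ha' : a = 1 := ha
      have hc' : c = 1 := hc
      subst ha' hc'
      obtain ⟨h0u, h1u, h2u, h3u⟩ := pg_countsV4 (p := p) (n := n) hp hq hpq hb
      obtain ⟨h0v, h1v, h2v, h3v⟩ := pg_countsV4 (p := p) (n := n) hp hq hpq hd
      fin_cases j
      · exact h0u.trans h0v.symm
      · exact h1u.trans h1v.symm
      · exact h2u.trans h2v.symm
      · exact h3u.trans h3v.symm
  · intro u hu
    obtain ⟨a, b⟩ := u
    obtain ⟨ha, hb⟩ := hu
    obtain ⟨h0, h1, h2, h3⟩ := pg_countsV3 hp hq hpq ha hb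
    exact ⟨h1, h2, h3⟩
end

section
/- Let G = El(pⁿ) × Z_m with n ≥ 2, p prime, m ≥ 1 and gcd(m, p) = 1. Then the dominating vertices of the enhanced power graph of G are exactly the elements (e, a) with a ∈ Z_m, where e is the identity of El(pⁿ). -/
open Polynomial

lemma El_pow_p {p n : ℕ} (y : Multiplicative (Fin n → ZMod p)) (t : ℤ) :
    y ^ ((p : ℤ) * t) = 1 := by
  have h1 : y ^ (p : ℤ) = 1 := by
    apply Multiplicative.toAdd.injective
    rw [toAdd_zpow]
    funext i
    show (p : ℤ) • (Multiplicative.toAdd y i) = _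
    simp [zsmul_eq_mul, ZMod.natCast_self]
  rw [zpow_mul, h1, one_zpow]

lemma ofAdd_one_zpow {m : ℕ} (k : ℤ) :
    (Multiplicative.ofAdd (1 : ZMod m)) ^ k = Multiplicative.ofAdd ((k : ZMod m)) := by
  rw [← ofAdd_zsmul, zsmul_one]


theorem stmt13 (p n m : ℕ) (hp : p.Prime) (hn : 2 ≤ n) (hm : 1 ≤ m)
    (hgcd : Nat.gcd m p = 1) (g : El p n × Multiplicative (ZMod m)) :
    (∀ h : El p n × Multiplicative (ZMod m), h ≠ g →
        (enhancedPowerGraph (El p n × Multiplicative (ZMod m))).Adj g h)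
      ↔ g.1 = 1 := by
  haveI : NeZero m := ⟨by omega⟩
  haveI := Fact.mk hp
  constructor
  · intro hdom
    by_contra hg1
    have hadd : Multiplicative.toAdd g.1 ≠ 0 := fun h => hg1 (Multiplicative.toAdd.injective h)
    obtain ⟨i, hi0⟩ := Function.ne_iff.mp hadd
    have hi : Multiplicative.toAdd g.1 i ≠ 0 := by simpa using hi0
    haveI : Nontrivial (Fin n) := Fin.nontrivial_iff_two_le.mpr hn
    obtain ⟨j, hj⟩ := exists_ne i
    set x : Fin n → ZMod p := Pi.single j 1 with hx
    have hne : (⟨Multiplicative.ofAdd x, g.2⟩ : El p n × Multiplicative (ZMod m)) ≠ g := by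
      intro h
      apply hi
      have h1 : Multiplicative.ofAdd x = g.1 := congrArg Prod.fst h
      have h2 : x = Multiplicative.toAdd g.1 := by rw [← h1]; rfl
      rw [← h2, hx]
      exact Pi.single_eq_of_ne (Ne.symm hj) 1
    obtain ⟨-, c, hgc, hhc⟩ := hdom _ hne
    obtain ⟨s, hs0⟩ := hgc
    obtain ⟨t, ht0⟩ := hhc
    have hs : c ^ s = g := hs0
    have ht : c ^ t = (Multiplicative.ofAdd x, g.2) := ht0
    have coordeq : ∀ (k : ℤ) (w : El p n) (l : Fin n), c ^ k = (w, g.2) →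
        (k : ZMod p) * Multiplicative.toAdd c.1 l = Multiplicative.toAdd w l := by
      intro k w l hk
      have h1 : c.1 ^ k = w := congrArg Prod.fst hk
      have h2 := congrArg Multiplicative.toAdd h1
      rw [toAdd_zpow] at h2
      have h3 := congrFun h2 l
      simpa [zsmul_eq_mul] using h3
    have hs1 := coordeq s g.1 i (by rw [hs])
    have ht1 := coordeq t (Multiplicative.ofAdd x) i ht
    have ht2 := coordeq t (Multiplicative.ofAdd x) j ht
    have hxi : Multiplicative.toAdd (Multiplicative.ofAdd x) i = 0 := by
      exact Pi.single_eq_of_ne (Ne.symm hj) 1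
    have hxj : Multiplicative.toAdd (Multiplicative.ofAdd x) j = 1 := by
      simp [hx]
    rw [hxi] at ht1
    rw [hxj] at ht2
    have hci : Multiplicative.toAdd c.1 i ≠ 0 := by
      intro h0
      rw [h0, mul_zero] at hs1
      exact hi hs1.symm
    have ht0 : (t : ZMod p) = 0 := by
      rcases mul_eq_zero.mp ht1 with h | h
      · exact h
      · exact absurd h hci
    rw [ht0, zero_mul] at ht2
    exact one_ne_zero ht2.symm
  · intro hg1 h hne
    refine ⟨hne.symm, (h.1, Multiplicative.ofAdd (1 : ZMod m)), ?_, ?_⟩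
    · -- g in zpowers
      have hpv : (((p : ℤ) * Nat.gcdB m p : ℤ) : ZMod m) = 1 := by
        have hbez : (1 : ℤ) = m * Nat.gcdA m p + p * Nat.gcdB m p := by
          have := Nat.gcd_eq_gcd_ab m p
          rw [hgcd] at this; exact_mod_cast this
        have h2 : ((1:ℤ) : ZMod m) = ((m * Nat.gcdA m p + p * Nat.gcdB m p : ℤ) : ZMod m) := by
          rw [← hbez]
        push_cast at h2
        simpa [ZMod.natCast_self] using h2.symm
      refine Subgroup.mem_zpowers_iff.mpr
        ⟨(p : ℤ) * Nat.gcdB m p * ((Multiplicative.toAdd g.2).val : ℤ), ?_⟩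
      have h1 : (h.1 : El p n) ^ ((p : ℤ) * Nat.gcdB m p * ((Multiplicative.toAdd g.2).val : ℤ)) = 1 := by
        rw [mul_assoc]; exact El_pow_p _ _
      have h2 : (Multiplicative.ofAdd (1 : ZMod m)) ^
          ((p : ℤ) * Nat.gcdB m p * ((Multiplicative.toAdd g.2).val : ℤ)) = g.2 := by
        rw [ofAdd_one_zpow]
        have : (((p : ℤ) * Nat.gcdB m p * ((Multiplicative.toAdd g.2).val : ℤ) : ℤ) : ZMod m)
            = Multiplicative.toAdd g.2 := by
          rw [Int.cast_mul, hpv, one_mul]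
          push_cast
          simp [ZMod.natCast_val, ZMod.cast_id]
        rw [this]
        rfl
      exact Prod.ext (by rw [show ((h.1, Multiplicative.ofAdd (1 : ZMod m)) ^
          ((p : ℤ) * Nat.gcdB m p * ((Multiplicative.toAdd g.2).val : ℤ))).1
          = h.1 ^ ((p : ℤ) * Nat.gcdB m p * ((Multiplicative.toAdd g.2).val : ℤ)) from rfl,
          h1, hg1]) (by exact h2)
    · -- h in zpowers
      have hpv : (((p : ℤ) * Nat.gcdB m p : ℤ) : ZMod m) = 1 := by
        have hbez : (1 : ℤ) = m * Nat.gcdA m p + p * Nat.gcdB m p := by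
          have := Nat.gcd_eq_gcd_ab m p
          rw [hgcd] at this; exact_mod_cast this
        have h2 : ((1:ℤ) : ZMod m) = ((m * Nat.gcdA m p + p * Nat.gcdB m p : ℤ) : ZMod m) := by
          rw [← hbez]
        push_cast at h2
        simpa [ZMod.natCast_self] using h2.symm
      set B : ℤ := ((Multiplicative.toAdd h.2 - 1).val : ℤ) with hB
      refine Subgroup.mem_zpowers_iff.mpr ⟨1 + (p : ℤ) * Nat.gcdB m p * B, ?_⟩
      have h1 : (h.1 : El p n) ^ (1 + (p : ℤ) * Nat.gcdB m p * B) = h.1 := by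
        rw [zpow_add, zpow_one, mul_assoc, El_pow_p, mul_one]
      have h2 : (Multiplicative.ofAdd (1 : ZMod m)) ^ (1 + (p : ℤ) * Nat.gcdB m p * B) = h.2 := by
        rw [ofAdd_one_zpow]
        have : ((1 + (p : ℤ) * Nat.gcdB m p * B : ℤ) : ZMod m) = Multiplicative.toAdd h.2 := by
          rw [Int.cast_add, Int.cast_mul, hpv, one_mul, Int.cast_one, hB]
          push_cast
          simp [ZMod.natCast_val, ZMod.cast_id]
        rw [this]
        rfl
      exact Prod.ext (by exact h1) (by exact h2)
end

section
/- Let G = El(pⁿ) × Z_m with n ≥ 2, p prime, and gcd(m, p) = 1, and let α = (pⁿ − 1)/(p − 1). Then the characteristic polynomial of the distance matrix of the enhanced power graph of G equals (x + mp − m + 1)^{α−1} (x + 1)^{(mp−m−1)α + m − 1} (x² + (mp + 2 − 2mpⁿ)x + m²(pⁿ − p) − 2mpⁿ + mp + 1). -/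
open Polynomial

open Subgroup Matrix

set_option linter.unusedSectionVars false

namespace Stmt14Aux

section A
variable {p n : ℕ} [NeZero p]

lemma El_pow_p (x : El p n) : x ^ p = 1 := by
  have : Multiplicative.toAdd (x ^ p) = Multiplicative.toAdd (1 : El p n) := by
    rw [toAdd_pow]
    funext i
    simp [nsmul_eq_mul, ZMod.natCast_self]
  exact Multiplicative.toAdd.injective this

lemma El_orderOf (hp : p.Prime) {x : El p n} (hx : x ≠ 1) : orderOf x = p :=
  haveI : Fact p.Prime := ⟨hp⟩
  orderOf_eq_prime (El_pow_p x) hx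

lemma zpowers_eq_of_mem (hp : p.Prime) {x y : El p n} (hx : x ≠ 1)
    (hxy : x ∈ zpowers y) : zpowers x = zpowers y := by
  have hy : y ≠ 1 := by
    rintro rfl
    rw [Subgroup.zpowers_one_eq_bot, Subgroup.mem_bot] at hxy
    exact hx hxy
  refine Subgroup.eq_of_le_of_card_ge ((Subgroup.zpowers_le).2 hxy) ?_
  rw [Nat.card_zpowers, Nat.card_zpowers, El_orderOf hp hx, El_orderOf hp hy]

lemma zpowers_eq_iff (hp : p.Prime) {a b : El p n} (ha : a ≠ 1) :
    zpowers b = zpowers a ↔ b ∈ zpowers a ∧ b ≠ 1 := by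
  constructor
  · intro h
    refine ⟨h ▸ Subgroup.mem_zpowers b, ?_⟩
    rintro rfl
    rw [Subgroup.zpowers_one_eq_bot] at h
    exact ha (Subgroup.mem_bot.1 (h ▸ Subgroup.mem_zpowers a))
  · rintro ⟨hb, hb1⟩
    exact zpowers_eq_of_mem hp hb1 hb

lemma card_class (hp : p.Prime) {a : El p n} (ha : a ≠ 1) :
    Nat.card {b : El p n // zpowers b = zpowers a} = p - 1 := by
  have hset : {b : El p n | zpowers b = zpowers a} = (zpowers a : Set (El p n)) \ {1} := by
    ext b
    simp only [Set.mem_setOf_eq, Set.mem_diff, Set.mem_singleton_iff, SetLike.mem_coe]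
    exact zpowers_eq_iff hp ha
  rw [show {b : El p n // zpowers b = zpowers a} = ↥{b : El p n | zpowers b = zpowers a} from rfl,
    Nat.card_coe_set_eq, hset, Set.ncard_diff_singleton_of_mem (Subgroup.one_mem _),
    ← Nat.card_coe_set_eq, SetLike.coe_sort_coe, Nat.card_zpowers, El_orderOf hp ha]

end A

section B
variable (p n : ℕ) [NeZero p]

def lineSetoid : Setoid (El p n) := Setoid.ker fun a => Subgroup.zpowers a

abbrev Lam := Quotient (lineSetoid p n)

noncomputable instance : Fintype (Lam p n) := Fintype.ofFinite _

def cls (a : El p n) : Lam p n := Quotient.mk (lineSetoid p n) a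

variable {p n}

lemma cls_eq_iff {a b : El p n} : cls p n a = cls p n b ↔ zpowers a = zpowers b := by
  rw [cls, cls, Quotient.eq]
  exact Setoid.ker_def

lemma cls_eq_one_iff {b : El p n} : cls p n b = cls p n 1 ↔ b = 1 := by
  rw [cls_eq_iff, Subgroup.zpowers_one_eq_bot, Subgroup.zpowers_eq_bot]

lemma card_fiber (hp : p.Prime) {lam : Lam p n} (hl : lam ≠ cls p n 1) :
    Nat.card {b : El p n // cls p n b = lam} = p - 1 := by
  obtain ⟨a, rfl⟩ := Quotient.exists_rep lam
  have ha : a ≠ 1 := by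
    intro h
    exact hl (by rw [← h]; rfl)
  have : {b : El p n // cls p n b = Quotient.mk _ a} ≃ {b : El p n // zpowers b = zpowers a} :=
    Equiv.subtypeEquivRight (fun b => cls_eq_iff (b := a))
  rw [Nat.card_congr this, card_class hp ha]

lemma card_El : Fintype.card (El p n) = p ^ n := by
  simp [El, ZMod.card]

lemma card_Lam (hp : p.Prime) {α : ℕ} (hα : (p - 1) * α = p ^ n - 1) :
    Fintype.card (Lam p n) = α + 1 := by
  classical
  have key : (Finset.univ : Finset (El p n)).card
      = ∑ lam : Lam p n, (Finset.univ.filter (fun b : El p n => cls p n b = lam)).card :=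
    Finset.card_eq_sum_card_fiberwise (fun b _ => Finset.mem_univ _)
  rw [Finset.card_univ, card_El] at key
  have h1 : (Finset.univ.filter (fun b : El p n => cls p n b = cls p n 1)).card = 1 := by
    rw [show Finset.univ.filter (fun b : El p n => cls p n b = cls p n 1) = {1} by
      ext b; simp [cls_eq_one_iff]]
    rfl
  have h2 : ∀ lam ∈ Finset.univ.erase (cls p n 1),
      (Finset.univ.filter (fun b : El p n => cls p n b = lam)).card = p - 1 := by
    intro lam hlam
    rw [← Fintype.card_subtype, ← Nat.card_eq_fintype_card]
    exact card_fiber hp (Finset.mem_erase.1 hlam).1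
  rw [← Finset.add_sum_erase _ _ (Finset.mem_univ (cls p n 1)), h1,
    Finset.sum_congr rfl h2, Finset.sum_const, smul_eq_mul] at key
  have hcard : (Finset.univ.erase (cls p n 1)).card = Fintype.card (Lam p n) - 1 := by
    rw [Finset.card_erase_of_mem (Finset.mem_univ _), Finset.card_univ]
  rw [hcard] at key
  have hp1 : 0 < p - 1 := by have := hp.two_le; omega
  have hpn : 1 ≤ p ^ n := Nat.one_le_pow _ _ hp.pos
  have hΛ1 : 1 ≤ Fintype.card (Lam p n) := Fintype.card_pos
  have : (Fintype.card (Lam p n) - 1) * (p - 1) = (p - 1) * α := by omega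
  have := Nat.eq_of_mul_eq_mul_right hp1 (this.trans (mul_comm _ _))
  omega

end B

section C
variable {p n m : ℕ} [NeZero p] [NeZero m]

abbrev GG (p n m : ℕ) : Type := El p n × Multiplicative (ZMod m)

lemma ZM_pow_m (y : Multiplicative (ZMod m)) : y ^ m = 1 := by
  have : Multiplicative.toAdd (y ^ m) = Multiplicative.toAdd (1 : Multiplicative (ZMod m)) := by
    rw [toAdd_pow]
    simp [nsmul_eq_mul, ZMod.natCast_self]
  exact Multiplicative.toAdd.injective this

/-- `ofAdd 1` generates `Multiplicative (ZMod m)`. -/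
lemma exists_pow_gen (y : Multiplicative (ZMod m)) :
    ∃ t : ℕ, (Multiplicative.ofAdd (1 : ZMod m)) ^ t = y := by
  refine ⟨(Multiplicative.toAdd y).val, Multiplicative.toAdd.injective ?_⟩
  rw [toAdd_pow]
  simp [nsmul_eq_mul, ZMod.natCast_val, ZMod.cast_id]

lemma mem_zpowers_pair (hgcd : Nat.gcd m p = 1) {x w : El p n}
    (hw : w ∈ Subgroup.zpowers x) (y : Multiplicative (ZMod m)) :
    ((w, y) : GG p n m) ∈ Subgroup.zpowers
      ((x, Multiplicative.ofAdd (1 : ZMod m)) : GG p n m) := by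
  obtain ⟨j, hj⟩ := Subgroup.mem_zpowers_iff.1 hw
  obtain ⟨t, ht⟩ := exists_pow_gen y
  set g : Multiplicative (ZMod m) := Multiplicative.ofAdd (1 : ZMod m)
  have hbez : (1 : ℤ) = m * Nat.gcdA m p + p * Nat.gcdB m p := by
    have := Nat.gcd_eq_gcd_ab m p
    rw [hgcd] at this
    exact_mod_cast this
  set u : ℤ := Nat.gcdB m p
  set v : ℤ := Nat.gcdA m p
  set k : ℤ := j * m * v + t * p * u with hk
  refine Subgroup.mem_zpowers_iff.2 ⟨k, ?_⟩
  have hxp : x ^ (p : ℤ) = 1 := by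
    rw [zpow_natCast, El_pow_p]
  have hgm : g ^ (m : ℤ) = 1 := by
    rw [zpow_natCast, ZM_pow_m]
  have h1 : ((x, g) : GG p n m) ^ k = (x ^ k, g ^ k) := rfl
  rw [h1]
  have hx : x ^ k = w := by
    have : k = j + p * (u * (t - j)) := by
      rw [hk]
      linear_combination (-j) * hbez
    rw [this, _root_.zpow_add, _root_.zpow_mul, hxp, _root_.one_zpow, mul_one, hj]
  have hg : g ^ k = y := by
    have : k = (t : ℤ) + m * (v * (j - t)) := by
      rw [hk]
      linear_combination (-(t : ℤ)) * hbez
    rw [this, _root_.zpow_add, _root_.zpow_mul, hgm, _root_.one_zpow, mul_one, zpow_natCast, ht]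
  rw [hx, hg]

lemma adj_iff (hp : p.Prime) (hgcd : Nat.gcd m p = 1) {a b : GG p n m} (hab : a ≠ b) :
    (enhancedPowerGraph (GG p n m)).Adj a b
      ↔ (a.1 = 1 ∨ b.1 = 1 ∨ zpowers a.1 = zpowers b.1) := by
  constructor
  · rintro ⟨-, c, ha, hb⟩
    by_cases ha1 : a.1 = 1
    · exact Or.inl ha1
    by_cases hb1 : b.1 = 1
    · exact Or.inr (Or.inl hb1)
    refine Or.inr (Or.inr ?_)
    have hac : a.1 ∈ zpowers c.1 := by
      obtain ⟨j, hj⟩ := Subgroup.mem_zpowers_iff.1 ha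
      exact Subgroup.mem_zpowers_iff.2 ⟨j, congrArg Prod.fst hj⟩
    have hbc : b.1 ∈ zpowers c.1 := by
      obtain ⟨j, hj⟩ := Subgroup.mem_zpowers_iff.1 hb
      exact Subgroup.mem_zpowers_iff.2 ⟨j, congrArg Prod.fst hj⟩
    rw [zpowers_eq_of_mem hp ha1 hac, zpowers_eq_of_mem hp hb1 hbc]
  · intro h
    refine ⟨hab, ?_⟩
    rcases h with h | h | h
    · refine ⟨(b.1, Multiplicative.ofAdd (1 : ZMod m)), ?_, ?_⟩
      · have := mem_zpowers_pair (p := p) (n := n) hgcd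
          (h ▸ Subgroup.one_mem (zpowers b.1) : a.1 ∈ zpowers b.1) a.2
        simpa using this
      · have := mem_zpowers_pair (p := p) (n := n) hgcd
          (Subgroup.mem_zpowers b.1) b.2
        simpa using this
    · refine ⟨(a.1, Multiplicative.ofAdd (1 : ZMod m)), ?_, ?_⟩
      · have := mem_zpowers_pair (p := p) (n := n) hgcd (Subgroup.mem_zpowers a.1) a.2
        simpa using this
      · have := mem_zpowers_pair (p := p) (n := n) hgcd
          (h ▸ Subgroup.one_mem (zpowers a.1) : b.1 ∈ zpowers a.1) b.2
        simpa using this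
    · refine ⟨(a.1, Multiplicative.ofAdd (1 : ZMod m)), ?_, ?_⟩
      · have := mem_zpowers_pair (p := p) (n := n) hgcd (Subgroup.mem_zpowers a.1) a.2
        simpa using this
      · have := mem_zpowers_pair (p := p) (n := n) hgcd
          (h ▸ Subgroup.mem_zpowers b.1 : b.1 ∈ zpowers a.1) b.2
        simpa using this

end C

section D
variable {G : Type*} [Group G]

lemma adj_one {v : G} (hv : v ≠ 1) : (enhancedPowerGraph G).Adj v 1 :=
  ⟨hv, v, Subgroup.mem_zpowers v, Subgroup.one_mem _⟩

lemma dist_eq_two {u v : G} (h1 : u ≠ v) (h2 : ¬ (enhancedPowerGraph G).Adj u v) :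
    (enhancedPowerGraph G).dist u v = 2 := by
  have hu : u ≠ 1 := by
    rintro rfl
    exact h2 ⟨h1, v, Subgroup.one_mem _, Subgroup.mem_zpowers v⟩
  have hv : v ≠ 1 := by
    rintro rfl
    exact h2 ⟨h1, u, Subgroup.mem_zpowers u, Subgroup.one_mem _⟩
  have h3 : (enhancedPowerGraph G).dist u v ≤ 2 := by
    have := SimpleGraph.dist_le
      (SimpleGraph.Walk.cons (adj_one hu) ((adj_one hv).symm.toWalk))
    simpa using this
  have h4 : (enhancedPowerGraph G).dist u v ≠ 1 := fun h =>
    h2 (SimpleGraph.dist_eq_one_iff_adj.1 h)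
  have h5 : 0 < (enhancedPowerGraph G).dist u v :=
    SimpleGraph.Reachable.pos_dist_of_ne
      ⟨SimpleGraph.Walk.cons (adj_one hu) ((adj_one hv).symm.toWalk)⟩ h1
  omega

end D

section E
variable {p n m : ℕ} [NeZero p] [NeZero m]

open scoped Classical in
lemma distM (hp : p.Prime) (hgcd : Nat.gcd m p = 1) (g h : GG p n m) :
    distMatrix (enhancedPowerGraph (GG p n m)) g h
      = if g = h then 0
        else if (g.1 = 1 ∨ h.1 = 1 ∨ cls p n g.1 = cls p n h.1) then 1 else 2 := by
  by_cases hgh : g = h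
  · simp [distMatrix, hgh, SimpleGraph.dist_self]
  · rw [distMatrix, if_neg hgh]
    by_cases hadj : (g.1 = 1 ∨ h.1 = 1 ∨ cls p n g.1 = cls p n h.1)
    · rw [if_pos hadj]
      have : (enhancedPowerGraph (GG p n m)).Adj g h := by
        rw [adj_iff hp hgcd hgh]
        rcases hadj with h1 | h1 | h1
        exacts [Or.inl h1, Or.inr (Or.inl h1), Or.inr (Or.inr (cls_eq_iff.1 h1))]
      rw [SimpleGraph.dist_eq_one_iff_adj.2 this]
      norm_num
    · rw [if_neg hadj]
      have : ¬ (enhancedPowerGraph (GG p n m)).Adj g h := by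
        rw [adj_iff hp hgcd hgh]
        intro hc
        refine hadj ?_
        rcases hc with h1 | h1 | h1
        exacts [Or.inl h1, Or.inr (Or.inl h1), Or.inr (Or.inr (cls_eq_iff.2 h1))]
      rw [dist_eq_two hgh this]
      norm_num

end E

section F
variable (p n m : ℕ) [NeZero p] [NeZero m]

open scoped Classical

noncomputable def Pm : Matrix (GG p n m) (Lam p n) ℝ :=
  Matrix.of fun g lam => if ¬ g.1 = 1 ∧ cls p n g.1 = lam then 1 else 0

noncomputable def Zm : Matrix (GG p n m) (Fin 2) ℝ :=
  Matrix.of fun g j =>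
    if j = 0 then (if g.1 = 1 then -1 else 0) else (if g.1 = 1 then 0 else -1)

noncomputable def Wm : Matrix (GG p n m) (Fin 2) ℝ :=
  Matrix.of fun g j => if j = 0 then 1 else (if g.1 = 1 then 1 else 2)

noncomputable def Ym (x : ℝ) : Matrix (GG p n m) (Fin 2) ℝ :=
  Matrix.of fun g j =>
    if j = 0 then (if g.1 = 1 then -(x + 1)⁻¹ else 0)
    else (if g.1 = 1 then 0 else -((x + 1) + ((p : ℝ) - 1) * m)⁻¹)

noncomputable def M0 (x : ℝ) : Matrix (GG p n m) (GG p n m) ℝ :=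
  (x + 1) • (1 : Matrix (GG p n m) (GG p n m) ℝ) + Pm p n m * (Pm p n m)ᵀ

variable {p n m}

lemma card_center : Nat.card {g : GG p n m // g.1 = 1} = m := by
  have e : {g : GG p n m // g.1 = 1} ≃ Multiplicative (ZMod m) :=
    { toFun := fun g => g.1.2
      invFun := fun z => ⟨(1, z), rfl⟩
      left_inv := by
        rintro ⟨⟨g1, g2⟩, hg⟩
        simp only at hg
        subst hg
        rfl
      right_inv := fun z => rfl }
  rw [Nat.card_congr e, Nat.card_congr Multiplicative.toAdd, Nat.card_zmod]

lemma card_GG : Fintype.card (GG p n m) = p ^ n * m := by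
  simp [GG, El, ZMod.card]

lemma card_block (hp : p.Prime) {a : El p n} (ha : ¬ a = 1) :
    Nat.card {g : GG p n m // ¬ g.1 = 1 ∧ cls p n g.1 = cls p n a} = (p - 1) * m := by
  have e : {g : GG p n m // ¬ g.1 = 1 ∧ cls p n g.1 = cls p n a}
      ≃ {b : El p n // cls p n b = cls p n a} × Multiplicative (ZMod m) :=
    { toFun := fun g => (⟨g.1.1, g.2.2⟩, g.1.2)
      invFun := fun bz => ⟨(bz.1.1, bz.2), by
        refine ⟨?_, bz.1.2⟩
        intro h1
        have h2 : cls p n (1 : El p n) = cls p n a := by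
          rw [← (show (bz.1 : El p n) = 1 from h1)]; exact bz.1.2
        exact ha (cls_eq_one_iff.1 h2.symm)⟩
      left_inv := by rintro ⟨⟨g1, g2⟩, hg⟩; rfl
      right_inv := by rintro ⟨⟨b, hb⟩, z⟩; rfl }
  rw [Nat.card_congr e, Nat.card_prod, Nat.card_congr Multiplicative.toAdd, Nat.card_zmod,
    card_fiber hp (fun h => ha (cls_eq_one_iff.1 h))]

lemma sum_ind {ι : Type*} [Fintype ι] (P : ι → Prop) [DecidablePred P] :
    ∑ g : ι, (if P g then (1:ℝ) else 0) = (Nat.card {g // P g} : ℝ) := by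
  rw [Finset.sum_boole, Nat.card_eq_fintype_card, Fintype.card_subtype]

lemma sum_ind_eq {ι : Type*} [Fintype ι] [DecidableEq ι] (c1 c2 : ι) :
    ∑ lam : ι, (if c1 = lam then (1:ℝ) else 0) * (if c2 = lam then 1 else 0)
      = if c1 = c2 then 1 else 0 := by
  rw [Finset.sum_eq_single c1]
  · by_cases h : c1 = c2 <;> simp [h, eq_comm]
  · intro b _ hb
    rw [if_neg (Ne.symm hb), zero_mul]
  · intro h
    exact absurd (Finset.mem_univ c1) h

lemma PmPmT_apply (g h : GG p n m) :
    (Pm p n m * (Pm p n m)ᵀ) g h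
      = if (¬ g.1 = 1 ∧ ¬ h.1 = 1 ∧ cls p n g.1 = cls p n h.1) then 1 else 0 := by
  rw [Matrix.mul_apply]
  simp only [Matrix.transpose_apply, Pm, Matrix.of_apply]
  by_cases hA : g.1 = 1
  · simp [hA]
  by_cases hB : h.1 = 1
  · simp [hA, hB]
  simp only [hA, hB, not_false_iff, true_and]
  exact sum_ind_eq (cls p n g.1) (cls p n h.1)

lemma key1 (hp : p.Prime) (hgcd : Nat.gcd m p = 1) (x : ℝ) :
    x • (1 : Matrix (GG p n m) (GG p n m) ℝ)
        - distMatrix (enhancedPowerGraph (GG p n m))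
      = M0 p n m x + Zm p n m * (Wm p n m)ᵀ := by
  ext g h
  rw [Matrix.sub_apply, Matrix.smul_apply, Matrix.add_apply, M0, Matrix.add_apply,
    Matrix.smul_apply, PmPmT_apply, distM hp hgcd, Matrix.mul_apply, Fin.sum_univ_two]
  simp only [Zm, Wm, Matrix.transpose_apply, Matrix.of_apply, Matrix.one_apply]
  by_cases hgh : g = h
  · subst hgh
    by_cases hA : g.1 = 1 <;> simp [hA] <;> ring
  · by_cases hA : g.1 = 1 <;> by_cases hB : h.1 = 1 <;>
      by_cases hc : cls p n g.1 = cls p n h.1 <;>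
      simp [hgh, hA, hB, hc] <;> ring

lemma hblock (hp : p.Prime) {g : GG p n m} (hg : ¬ g.1 = 1) :
    ∑ h : GG p n m, (if (¬ h.1 = 1 ∧ cls p n g.1 = cls p n h.1) then (1:ℝ) else 0)
      = ((p : ℝ) - 1) * m := by
  rw [sum_ind]
  have e : {h : GG p n m // ¬ h.1 = 1 ∧ cls p n g.1 = cls p n h.1}
      ≃ {h : GG p n m // ¬ h.1 = 1 ∧ cls p n h.1 = cls p n g.1} :=
    Equiv.subtypeEquivRight (fun h => and_congr_right (fun _ => eq_comm))
  rw [Nat.card_congr e, card_block hp hg]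
  push_cast [Nat.cast_sub hp.one_le]
  ring

lemma key2 (hp : p.Prime) {x : ℝ} (hx1 : x + 1 ≠ 0)
    (hx2 : x + 1 + ((p : ℝ) - 1) * m ≠ 0) :
    M0 p n m x * Ym p n m x = Zm p n m := by
  have hPY : ∀ (g : GG p n m) (j : Fin 2), ((Pm p n m * (Pm p n m)ᵀ) * Ym p n m x) g j
      = if j = 0 then 0 else (if g.1 = 1 then 0
          else ((p:ℝ) - 1) * m * -((x + 1) + ((p : ℝ) - 1) * m)⁻¹) := by
    intro g j
    rw [Matrix.mul_apply]
    fin_cases j <;> simp only [Fin.mk_zero, Fin.mk_one]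
    · rw [if_pos trivial]
      apply Finset.sum_eq_zero
      intro h _
      rw [PmPmT_apply]
      by_cases hh : h.1 = 1 <;> simp [Ym, hh]
    · rw [if_neg (by norm_num)]
      by_cases hg : g.1 = 1
      · rw [if_pos hg]
        apply Finset.sum_eq_zero
        intro h _
        rw [PmPmT_apply]
        simp [hg]
      · rw [if_neg hg]
        have : ∀ h : GG p n m, (Pm p n m * (Pm p n m)ᵀ) g h * Ym p n m x h 1
            = (if (¬ h.1 = 1 ∧ cls p n g.1 = cls p n h.1) then (1:ℝ) else 0)
              * -((x + 1) + ((p : ℝ) - 1) * m)⁻¹ := by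
          intro h
          rw [PmPmT_apply]
          by_cases hh : h.1 = 1 <;> simp [Ym, hh, hg]
        rw [Finset.sum_congr rfl (fun h _ => this h), ← Finset.sum_mul, hblock hp hg]
  ext g j
  rw [M0, Matrix.add_mul, Matrix.smul_mul, Matrix.one_mul, Matrix.add_apply,
    Matrix.smul_apply, hPY g j]
  fin_cases j <;> simp only [Fin.mk_zero, Fin.mk_one]
  · by_cases hg : g.1 = 1 <;> simp [Ym, Zm, hg] <;> field_simp
  · by_cases hg : g.1 = 1 <;> simp [Ym, Zm, hg]
    field_simp
    ring

lemma sum_center : ∑ g : GG p n m, (if g.1 = 1 then (1:ℝ) else 0) = m := by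
  rw [sum_ind, card_center]

lemma sum_noncenter :
    ∑ g : GG p n m, (if g.1 = 1 then 0 else (1:ℝ)) = (p:ℝ)^n * m - m := by
  have h : ∀ g : GG p n m, (if g.1 = 1 then (0:ℝ) else 1)
      = 1 - (if g.1 = 1 then 1 else 0) := by
    intro g; by_cases hg : g.1 = 1 <;> simp [hg]
  rw [Finset.sum_congr rfl (fun g _ => h g), Finset.sum_sub_distrib, sum_center,
    Finset.sum_const, Finset.card_univ, card_GG]
  push_cast
  ring

lemma WtY (x : ℝ) : (Wm p n m)ᵀ * Ym p n m x
    = Matrix.of fun i j : Fin 2 =>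
        if j = 0 then -(x+1)⁻¹ * m
        else -((x + 1) + ((p : ℝ) - 1) * m)⁻¹ * ((p:ℝ)^n * m - m) * (if i = 0 then 1 else 2) := by
  have h00 : ∀ g : GG p n m, (1:ℝ) * (if g.1 = 1 then -(x+1)⁻¹ else 0)
      = (if g.1 = 1 then (1:ℝ) else 0) * (-(x+1)⁻¹) := by
    intro g; by_cases hg : g.1 = 1 <;> simp [hg]
  have h10 : ∀ g : GG p n m,
      (if g.1 = 1 then (1:ℝ) else 2) * (if g.1 = 1 then -(x+1)⁻¹ else 0)
      = (if g.1 = 1 then (1:ℝ) else 0) * (-(x+1)⁻¹) := by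
    intro g; by_cases hg : g.1 = 1 <;> simp [hg]
  have h01 : ∀ g : GG p n m,
      (1:ℝ) * (if g.1 = 1 then 0 else -((x + 1) + ((p : ℝ) - 1) * m)⁻¹)
      = (if g.1 = 1 then (0:ℝ) else 1) * (-((x + 1) + ((p : ℝ) - 1) * m)⁻¹) := by
    intro g; by_cases hg : g.1 = 1 <;> simp [hg]
  have h11 : ∀ g : GG p n m,
      (if g.1 = 1 then (1:ℝ) else 2)
        * (if g.1 = 1 then 0 else -((x + 1) + ((p : ℝ) - 1) * m)⁻¹)
      = (if g.1 = 1 then (0:ℝ) else 1)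
        * (-((x + 1) + ((p : ℝ) - 1) * m)⁻¹ * 2) := by
    intro g; by_cases hg : g.1 = 1 <;> simp [hg] <;> ring
  have hf : ((1:Fin 2) = 0) = False := by decide
  ext i j
  rw [Matrix.mul_apply]
  simp only [Matrix.transpose_apply, Wm, Ym, Matrix.of_apply]
  fin_cases i <;> fin_cases j <;> simp only [Fin.mk_zero, Fin.mk_one, hf, if_true, if_false]
  · rw [Finset.sum_congr rfl (fun g _ => h00 g), ← Finset.sum_mul, sum_center]
    norm_num
    ring
  · rw [Finset.sum_congr rfl (fun g _ => h01 g), ← Finset.sum_mul, sum_noncenter]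
    norm_num
    ring
  · rw [Finset.sum_congr rfl (fun g _ => h10 g), ← Finset.sum_mul, sum_center]
    norm_num
    ring
  · rw [Finset.sum_congr rfl (fun g _ => h11 g), ← Finset.sum_mul, sum_noncenter]
    norm_num
    ring

lemma det2 (x : ℝ) : (1 + (Wm p n m)ᵀ * Ym p n m x).det
    = (1 + -(x+1)⁻¹ * m)
        * (1 + -((x + 1) + ((p:ℝ)-1)*m)⁻¹ * ((p:ℝ)^n*m - m) * 2)
      - (-((x + 1) + ((p:ℝ)-1)*m)⁻¹ * ((p:ℝ)^n*m - m)) * (-(x+1)⁻¹ * m) := by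
  rw [WtY, Matrix.det_fin_two]
  simp only [Matrix.add_apply, Matrix.one_apply, Matrix.of_apply]
  norm_num

end F

section G
variable (p n m : ℕ) [NeZero p] [NeZero m]
open scoped Classical

noncomputable def nR (lam : Lam p n) : ℝ :=
  (Nat.card {g : GG p n m // ¬ g.1 = 1 ∧ cls p n g.1 = lam} : ℝ)

variable {p n m}

lemma PtP : (Pm p n m)ᵀ * Pm p n m = Matrix.diagonal (nR p n m) := by
  ext l1 l2
  rw [Matrix.mul_apply]
  simp only [Matrix.transpose_apply, Pm, Matrix.of_apply]
  by_cases h : l1 = l2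
  · subst h
    rw [Matrix.diagonal_apply_eq, nR, ← sum_ind]
    apply Finset.sum_congr rfl
    intro g _
    by_cases hg : ¬ g.1 = 1 ∧ cls p n g.1 = l1 <;> simp [hg]
  · rw [Matrix.diagonal_apply_ne _ h]
    apply Finset.sum_eq_zero
    intro g _
    by_cases hg : ¬ g.1 = 1 ∧ cls p n g.1 = l1
    · rw [if_pos hg, one_mul, if_neg (fun hg2 => h (hg.2.symm.trans hg2.2))]
    · rw [if_neg hg, zero_mul]

lemma nR_one : nR p n m (cls p n 1) = 0 := by
  rw [nR]
  haveI : IsEmpty {g : GG p n m // ¬ g.1 = 1 ∧ cls p n g.1 = cls p n 1} :=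
    ⟨fun g => g.2.1 (cls_eq_one_iff.1 g.2.2)⟩
  rw [Nat.card_of_isEmpty]
  norm_num

lemma nR_ne (hp : p.Prime) {lam : Lam p n} (hl : lam ≠ cls p n 1) :
    nR p n m lam = ((p:ℝ) - 1) * m := by
  obtain ⟨a, rfl⟩ := Quotient.exists_rep lam
  have ha : ¬ a = 1 := fun h => hl (by rw [h]; rfl)
  rw [nR, show (Quotient.mk (lineSetoid p n) a : Lam p n) = cls p n a from rfl,
    card_block hp ha]
  push_cast [Nat.cast_sub hp.one_le]
  ring

lemma det_M0 (hp : p.Prime) {α : ℕ} (hα : (p - 1) * α = p ^ n - 1)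
    {x : ℝ} (hx1 : x + 1 ≠ 0) :
    (M0 p n m x).det
      = (x+1)^(Fintype.card (GG p n m)) * ((x+1)⁻¹)^(α+1)
        * ((x+1) * ((x + 1) + ((p:ℝ)-1)*m)^α) := by
  have h1 : M0 p n m x = (x+1) • (1 + ((x+1)⁻¹ • Pm p n m) * (Pm p n m)ᵀ) := by
    rw [Matrix.smul_mul, smul_add, smul_smul, mul_inv_cancel₀ hx1, one_smul, M0]
  rw [h1, Matrix.det_smul, Matrix.det_one_add_mul_comm, Matrix.mul_smul, PtP]
  have h2 : (1 : Matrix (Lam p n) (Lam p n) ℝ) + (x+1)⁻¹ • Matrix.diagonal (nR p n m)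
      = Matrix.diagonal (fun lam => 1 + (x+1)⁻¹ * nR p n m lam) := by
    ext i j
    by_cases hij : i = j
    · subst hij
      simp [Matrix.add_apply, Matrix.smul_apply, Matrix.diagonal_apply_eq, Matrix.one_apply]
    · simp [Matrix.add_apply, Matrix.smul_apply, Matrix.diagonal_apply_ne _ hij,
        Matrix.one_apply_ne hij]
  rw [h2, Matrix.det_diagonal]
  have h3 : ∀ lam : Lam p n, 1 + (x+1)⁻¹ * nR p n m lam
      = (x+1)⁻¹ * ((x+1) + nR p n m lam) := by
    intro lam
    field_simp
  rw [Finset.prod_congr rfl (fun lam _ => h3 lam), Finset.prod_mul_distrib,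
    Finset.prod_const, Finset.card_univ, card_Lam hp hα, ← mul_assoc]
  congr 1
  rw [← Finset.mul_prod_erase _ _ (Finset.mem_univ (cls p n 1)), nR_one, add_zero]
  congr 1
  rw [Finset.prod_congr rfl
    (fun lam hlam => by rw [nR_ne hp (Finset.mem_erase.1 hlam).1]),
    Finset.prod_const, Finset.card_erase_of_mem (Finset.mem_univ _), Finset.card_univ,
    card_Lam hp hα]
  norm_num

lemma eval_charpoly {ι : Type*} [Fintype ι] [DecidableEq ι] (M : Matrix ι ι ℝ) (x : ℝ) :
    M.charpoly.eval x = (x • (1 : Matrix ι ι ℝ) - M).det := by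
  rw [Matrix.charpoly, ← Polynomial.coe_evalRingHom, RingHom.map_det]
  congr 1
  ext i j
  by_cases h : i = j
  · subst h
    simp [Matrix.charmatrix_apply_eq, Matrix.sub_apply, Matrix.smul_apply, Matrix.one_apply]
  · simp [Matrix.charmatrix_apply_ne _ _ _ h, Matrix.sub_apply, Matrix.smul_apply,
      Matrix.one_apply_ne h]

end G
end Stmt14Aux

open Stmt14Aux in
theorem stmt14 (p n m α : ℕ) [NeZero p] [NeZero m] (hp : p.Prime) (hn : 2 ≤ n)
    (hm : 1 ≤ m) (hgcd : Nat.gcd m p = 1) (hα : (p - 1) * α = p ^ n - 1) :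
    (distMatrix (enhancedPowerGraph (El p n × Multiplicative (ZMod m)))).charpoly
      = (X + C ((m : ℝ) * p - m + 1)) ^ (α - 1)
        * (X + C 1) ^ ((m * p - m - 1) * α + m - 1)
        * (X ^ 2 + C ((m : ℝ) * p + 2 - 2 * m * p ^ n) * X
            + C ((m : ℝ) ^ 2 * ((p : ℝ) ^ n - p) - 2 * m * p ^ n + m * p + 1)) := by
  have hp2 := hp.two_le
  have hpn : 2 ≤ p ^ n := le_trans hp2 (Nat.le_self_pow (by omega) p)
  have hα1 : 1 ≤ α := by
    rcases Nat.eq_zero_or_pos α with h | h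
    · subst h; omega
    · exact h
  have hαZ : ((p:ℤ) - 1) * α = (p:ℤ)^n - 1 := by
    have := hα
    zify [hp.one_le, Nat.one_le_of_lt hpn] at this
    exact this
  have hmp1 : m ≤ m * p := Nat.le_mul_of_pos_right m hp.pos
  have hmp2 : 1 ≤ m * p - m := by
    have : m * 2 ≤ m * p := Nat.mul_le_mul_left m hp2
    omega
  have hNe : p ^ n * m = ((m * p - m - 1) * α + (m - 1)) + (α + 1) := by
    zify [hmp1, hmp2, hm]
    linear_combination (-(m:ℤ)) * hαZ
  apply Polynomial.eq_of_infinite_eval_eq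
  have hfin : ({-1, -(1 + ((p:ℝ)-1)*m)} : Set ℝ).Finite :=
    Set.Finite.insert _ (Set.finite_singleton _)
  apply Set.Infinite.mono (s := ({-1, -(1 + ((p:ℝ)-1)*m)} : Set ℝ)ᶜ)
    ?_ (hfin.infinite_compl)
  intro x hx
  simp only [Set.mem_compl_iff, Set.mem_insert_iff, Set.mem_singleton_iff, not_or] at hx
  obtain ⟨hxa, hxb⟩ := hx
  have hx1 : x + 1 ≠ 0 := fun h => hxa (by linarith)
  have hx2 : x + 1 + ((p:ℝ) - 1) * m ≠ 0 := fun h => hxb (by linarith)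
  show (distMatrix (enhancedPowerGraph (El p n × Multiplicative (ZMod m)))).charpoly.eval x = _
  rw [Stmt14Aux.eval_charpoly, key1 hp hgcd x, ← key2 hp hx1 hx2,
    show M0 p n m x + (M0 p n m x * Ym p n m x) * (Wm p n m)ᵀ
      = M0 p n m x * (1 + Ym p n m x * (Wm p n m)ᵀ) by
        rw [Matrix.mul_add, Matrix.mul_one, Matrix.mul_assoc],
    Matrix.det_mul, Matrix.det_one_add_mul_comm, det_M0 hp hα hx1, det2,
    show Fintype.card (GG p n m) = (((m * p - m - 1) * α + (m - 1)) + (α + 1)) by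
      rw [card_GG]; exact hNe]
  simp only [eval_mul, eval_pow, eval_add, eval_X, eval_C, eval_one]
  rw [show x + ((m:ℝ) * p - m + 1) = x + 1 + ((p:ℝ) - 1) * m from by push_cast; ring,
    show (m * p - m - 1) * α + m - 1 = (m * p - m - 1) * α + (m - 1) from by omega]
  have e1 : (x+1) ^ ((m * p - m - 1) * α + (m - 1) + (α + 1)) * ((x+1)⁻¹) ^ (α + 1)
      = (x+1) ^ ((m * p - m - 1) * α + (m - 1)) := by
    rw [pow_add, mul_assoc, ← mul_pow, mul_inv_cancel₀ hx1, one_pow, mul_one]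
  have e2 : (x + 1 + ((p:ℝ) - 1) * m) ^ α
      = (x + 1 + ((p:ℝ) - 1) * m) ^ (α - 1) * (x + 1 + ((p:ℝ) - 1) * m) := by
    rw [← pow_succ]
    congr 1
    omega
  have hq : (x+1) * (x + 1 + ((p:ℝ) - 1) * m)
      * ((1 + -(x + 1)⁻¹ * m) * (1 + -(x + 1 + ((p:ℝ) - 1) * m)⁻¹ * ((p:ℝ) ^ n * m - m) * 2)
        - -(x + 1 + ((p:ℝ) - 1) * m)⁻¹ * ((p:ℝ) ^ n * m - m) * (-(x + 1)⁻¹ * m))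
      = x ^ 2 + ((m:ℝ) * p + 2 - 2 * m * (p:ℝ) ^ n) * x
        + ((m:ℝ) ^ 2 * ((p:ℝ) ^ n - p) - 2 * m * (p:ℝ) ^ n + m * p + 1) := by
    field_simp
    ring
  rw [e2]
  linear_combination ((x+1) * ((x + 1 + ((p:ℝ)-1)*m) ^ (α-1) * (x + 1 + ((p:ℝ)-1)*m))
      * ((1 + -(x + 1)⁻¹ * m) * (1 + -(x + 1 + ((p:ℝ) - 1) * m)⁻¹ * ((p:ℝ) ^ n * m - m) * 2)
        - -(x + 1 + ((p:ℝ) - 1) * m)⁻¹ * ((p:ℝ) ^ n * m - m) * (-(x + 1)⁻¹ * m))) * e1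
    + ((x+1) ^ ((m*p-m-1)*α + (m-1)) * (x + 1 + ((p:ℝ)-1)*m)^(α-1)) * hq
end
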